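/- arXiv:1710.08662 — 7 statements merged into one kernel-verified Lean document; each statement's English description precedes it below -/
import Mathlib

section
/- Let k,l,n ∈ ℕ, let p ∈ P(k,l), let A be a unital C*-algebra and suppose the self-adjoint elements u_{ij} ∈ A (1 ≤ i,j ≤ n) fulfill the relations R(p). Then the elements u'_{ij} := Σ_{a=1}^n u_{ia} ⊗ u_{aj} of the algebraic tensor product A ⊗ A (with its canonical *-algebra structure, where (x⊗y)* = x*⊗y*) are self-adjoint and fulfill the relations R(p). -/
open scoped BigOperators

/-- A partition with `k` upper and `l` lower points, encoded as an equivalence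
relation on the disjoint union of the points; the blocks of the partition are
the equivalence classes. -/
abbrev PartitionKL (k l : ℕ) := Setoid (Fin k ⊕ Fin l)

namespace PartitionKL

/-- `DeltaCond p α β` holds iff `δ_p(α,β) = 1`, i.e. the labelling of the upper
points by `α` and of the lower points by `β` is constant on every block of `p`. -/
def DeltaCond {k l n : ℕ} (p : PartitionKL k l) (α : Fin k → Fin n) (β : Fin l → Fin n) : Prop :=
  ∀ x y : Fin k ⊕ Fin l, p.r x y → Sum.elim α β x = Sum.elim α β y

/-- The ordered product `u_{γ₁α₁} ⋯ u_{γ_mα_m}`. -/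
def uProd {m n : ℕ} {A : Type*} [Monoid A] (u : Fin n → Fin n → A) (γ α : Fin m → Fin n) : A :=
  (List.ofFn fun i : Fin m => u (γ i) (α i)).prod

open Classical in
/-- The elements `u i j` fulfill the relations `R(p)` associated to the partition `p`. -/
def FulfillsR {k l n : ℕ} {A : Type*} [Ring A] (p : PartitionKL k l) (u : Fin n → Fin n → A) :
    Prop :=
  ∀ (α : Fin k → Fin n) (β : Fin l → Fin n),
    (∑ γ : Fin k → Fin n, if DeltaCond p γ β then uProd u γ α else 0)
      = ∑ γ' : Fin l → Fin n, if DeltaCond p α γ' then uProd u β γ' else 0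

end PartitionKL


open scoped TensorProduct

private lemma uProd_succ' {m n : ℕ} {A : Type*} [Monoid A] (u : Fin n → Fin n → A)
    (γ α : Fin (m + 1) → Fin n) :
    PartitionKL.uProd u γ α
      = u (γ 0) (α 0) * PartitionKL.uProd u (fun i => γ i.succ) (fun i => α i.succ) := by
  simp [PartitionKL.uProd, List.ofFn_succ]

private lemma uProd_tensor' {m n : ℕ} {A : Type*} [CStarAlgebra A] (u : Fin n → Fin n → A)
    (γ α : Fin m → Fin n) :
    PartitionKL.uProd (fun i j => ∑ a : Fin n, u i a ⊗ₜ[ℂ] u a j) γ α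
      = ∑ b : Fin m → Fin n, PartitionKL.uProd u γ b ⊗ₜ[ℂ] PartitionKL.uProd u b α := by
  induction m with
  | zero => simp [PartitionKL.uProd, Algebra.TensorProduct.one_def]
  | succ m ih =>
    rw [uProd_succ', ih,
      ← Equiv.sum_comp (Fin.consEquiv fun _ : Fin (m+1) => Fin n)
        (fun b => PartitionKL.uProd u γ b ⊗ₜ[ℂ] PartitionKL.uProd u b α),
      Fintype.sum_prod_type, Finset.sum_mul_sum]
    refine Finset.sum_congr rfl fun a _ => Finset.sum_congr rfl fun b _ => ?_
    simp [Fin.consEquiv, uProd_succ', Algebra.TensorProduct.tmul_mul_tmul]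

open scoped TensorProduct in
/-- If self-adjoint elements `u i j` of a unital C*-algebra `A` fulfill the relations
`R(p)`, then the elements `u' i j := ∑ a, u i a ⊗ u a j` of the algebraic tensor
product `A ⊗ A` (with its canonical *-algebra structure, whose star `S` is the unique
additive map with `S (x ⊗ y) = star x ⊗ star y`) are self-adjoint and fulfill `R(p)`. -/
theorem comultiplication_fulfillsR {k l n : ℕ} (p : PartitionKL k l)
    {A : Type*} [CStarAlgebra A] (u : Fin n → Fin n → A)
    (hsa : ∀ i j, star (u i j) = u i j)
    (hu : PartitionKL.FulfillsR p u)
    (S : A ⊗[ℂ] A →+ A ⊗[ℂ] A)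
    (hS : ∀ x y : A, S (x ⊗ₜ[ℂ] y) = star x ⊗ₜ[ℂ] star y) :
    (∀ i j : Fin n,
        S (∑ a : Fin n, u i a ⊗ₜ[ℂ] u a j) = ∑ a : Fin n, u i a ⊗ₜ[ℂ] u a j)
      ∧ PartitionKL.FulfillsR p (fun i j => ∑ a : Fin n, u i a ⊗ₜ[ℂ] u a j) := by
  classical
  constructor
  · intro i j
    rw [map_sum]
    exact Finset.sum_congr rfl fun a _ => by rw [hS, hsa, hsa]
  · intro α β
    calc (∑ γ : Fin k → Fin n, if PartitionKL.DeltaCond p γ β then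
            PartitionKL.uProd (fun i j => ∑ a : Fin n, u i a ⊗ₜ[ℂ] u a j) γ α else 0)
        = ∑ γ : Fin k → Fin n, ∑ b : Fin k → Fin n,
            (if PartitionKL.DeltaCond p γ β then PartitionKL.uProd u γ b else 0)
              ⊗ₜ[ℂ] PartitionKL.uProd u b α := by
          refine Finset.sum_congr rfl fun γ _ => ?_
          rw [uProd_tensor']
          split_ifs with h
          · rfl
          · simp
      _ = ∑ b : Fin k → Fin n,
            (∑ γ : Fin k → Fin n, if PartitionKL.DeltaCond p γ β then PartitionKL.uProd u γ b else 0)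
              ⊗ₜ[ℂ] PartitionKL.uProd u b α := by
          rw [Finset.sum_comm]
          exact Finset.sum_congr rfl fun b _ => (TensorProduct.sum_tmul _ _ _).symm
      _ = ∑ b : Fin k → Fin n, ∑ γ' : Fin l → Fin n,
            PartitionKL.uProd u β γ' ⊗ₜ[ℂ]
              (if PartitionKL.DeltaCond p b γ' then PartitionKL.uProd u b α else 0) := by
          refine Finset.sum_congr rfl fun b _ => ?_
          rw [hu b β, TensorProduct.sum_tmul]
          refine Finset.sum_congr rfl fun γ' _ => ?_
          split_ifs with h
          · rfl
          · simp
      _ = ∑ γ' : Fin l → Fin n,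
            PartitionKL.uProd u β γ' ⊗ₜ[ℂ]
              (∑ b : Fin k → Fin n,
                if PartitionKL.DeltaCond p b γ' then PartitionKL.uProd u b α else 0) := by
          rw [Finset.sum_comm]
          exact Finset.sum_congr rfl fun γ' _ => (TensorProduct.tmul_sum _ _ _).symm
      _ = ∑ γ' : Fin l → Fin n, ∑ γ'' : Fin l → Fin n,
            (if PartitionKL.DeltaCond p α γ'' then
              PartitionKL.uProd u β γ' ⊗ₜ[ℂ] PartitionKL.uProd u γ' γ'' else 0) := by
          refine Finset.sum_congr rfl fun γ' _ => ?_
          rw [hu α γ', TensorProduct.tmul_sum]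
          refine Finset.sum_congr rfl fun γ'' _ => ?_
          split_ifs with h
          · rfl
          · simp
      _ = ∑ γ'' : Fin l → Fin n,
            (if PartitionKL.DeltaCond p α γ'' then
              PartitionKL.uProd (fun i j => ∑ a : Fin n, u i a ⊗ₜ[ℂ] u a j) β γ'' else 0) := by
          rw [Finset.sum_comm]
          refine Finset.sum_congr rfl fun γ'' _ => ?_
          rw [Finset.sum_ite_irrel, Finset.sum_const_zero, uProd_tensor']
end

section
/- Let n ∈ ℕ, l ≥ 2, and let p ∈ P(0,l) be a partition whose first (leftmost) lower point is not a singleton block. Let A be a unital C*-algebra and suppose the self-adjoint elements u_{ij} ∈ A (1 ≤ i,j ≤ n) fulfill the relations R(p). Then the matrix u = (u_{ij}) ∈ M_n(A) has a right inverse. -/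
open scoped BigOperators

namespace Partition

/-- `DeltaCond p α β` holds iff `δ_p(α,β) = 1`, i.e. the labelling of the upper
points by `α` and of the lower points by `β` is constant on every block of `p`. -/
def DeltaCond {k l n : ℕ} (p : PartitionKL k l) (α : Fin k → Fin n) (β : Fin l → Fin n) : Prop :=
  ∀ x y : Fin k ⊕ Fin l, p.r x y → Sum.elim α β x = Sum.elim α β y

/-- The ordered product `u_{γ₁α₁} ⋯ u_{γ_mα_m}`. -/
def uProd {m n : ℕ} {A : Type*} [Monoid A] (u : Fin n → Fin n → A) (γ α : Fin m → Fin n) : A :=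
  (List.ofFn fun i : Fin m => u (γ i) (α i)).prod

open Classical in
/-- The elements `u i j` fulfill the relations `R(p)` associated to the partition `p`. -/
def FulfillsR {k l n : ℕ} {A : Type*} [Ring A] (p : PartitionKL k l) (u : Fin n → Fin n → A) :
    Prop :=
  ∀ (α : Fin k → Fin n) (β : Fin l → Fin n),
    (∑ γ : Fin k → Fin n, if DeltaCond p γ β then uProd u γ α else 0)
      = ∑ γ' : Fin l → Fin n, if DeltaCond p α γ' then uProd u β γ' else 0

end Partition

open Finset in
lemma sum_piFinset_ofFn_prod {A : Type*} [Semiring A] {n : ℕ} :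
    ∀ {m : ℕ} (S : Fin m → Finset (Fin n)) (f : Fin m → Fin n → A),
    ∑ β ∈ Fintype.piFinset S, (List.ofFn fun i => f i (β i)).prod
      = (List.ofFn fun i => ∑ b ∈ S i, f i b).prod := by
  intro m
  induction m with
  | zero => intro S f; simp
  | succ m ih =>
    intro S f
    have h1 : ∑ β ∈ Fintype.piFinset S, (List.ofFn fun i => f i (β i)).prod
        = ∑ x ∈ (S 0) ×ˢ Fintype.piFinset (fun i : Fin m => S i.succ),
            (List.ofFn fun i => f i ((Fin.cons x.1 x.2 : Fin (m+1) → Fin n) i)).prod := by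
      refine Finset.sum_nbij' (fun β => (β 0, Fin.tail β))
        (fun x => (Fin.cons x.1 x.2 : Fin (m+1) → Fin n)) ?_ ?_ ?_ ?_ ?_
      · intro β hβ
        rw [Fin.mem_piFinset_iff_zero_tail] at hβ
        simpa [Finset.mem_product, Fin.tail] using hβ
      · intro x hx
        rw [Fin.mem_piFinset_iff_zero_tail]
        simpa [Finset.mem_product, Fin.tail_cons, Fin.tail] using hx
      · intro β _; exact Fin.cons_self_tail β
      · intro x _; simp [Fin.tail_cons]
      · intro β _; rw [Fin.cons_self_tail]
    rw [h1, Finset.sum_product]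
    simp only [List.ofFn_succ, List.prod_cons, Fin.cons_zero, Fin.cons_succ]
    rw [← ih (fun i => S i.succ) (fun i => f i.succ)]
    rw [Finset.sum_mul]
    exact Finset.sum_congr rfl fun b _ => (Finset.mul_sum _ _ _).symm


/-- If the self-adjoint elements `u i j` fulfill the relations `R(p)` for a partition
`p ∈ P(0,l)` whose first (leftmost) lower point is not a singleton block, then the
matrix `u` has a right inverse in `M_n(A)`. -/
theorem rightInvertible_of_fulfillsR {n l : ℕ} (hl : 2 ≤ l) (p : PartitionKL 0 l)
    (hfirst : ∃ j : Fin l, (j : ℕ) ≠ 0 ∧ p.r (Sum.inr ⟨0, by omega⟩) (Sum.inr j))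
    {A : Type*} [CStarAlgebra A] (u : Fin n → Fin n → A)
    (hsa : ∀ i j, star (u i j) = u i j) (hu : Partition.FulfillsR p u) :
    ∃ V : Matrix (Fin n) (Fin n) A, Matrix.of u * V = 1 := by
  classical
  rcases Nat.eq_zero_or_pos n with hn | hn
  · subst hn; exact ⟨1, by ext i j; exact i.elim0⟩
  obtain ⟨l', rfl⟩ : ∃ l', l = l' + 1 := ⟨l - 1, by omega⟩
  obtain ⟨j, hj0, hpj⟩ := hfirst
  have hjne : j ≠ 0 := fun h => hj0 (by simp [h])
  set α : Fin 0 → Fin n := fun i => i.elim0 with hα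
  set D : (Fin (l'+1) → Fin n) → Prop := Partition.DeltaCond p α with hD
  -- the basic relation from FulfillsR
  have hrel : ∀ β : Fin (l'+1) → Fin n,
      (if D β then (1:A) else 0)
        = ∑ γ : Fin (l'+1) → Fin n, if D γ then Partition.uProd u β γ else 0 := by
    intro β
    have h := hu α β
    have h0 : (∑ γ : Fin 0 → Fin n, if Partition.DeltaCond p γ β then Partition.uProd u γ α else 0)
        = if D β then (1:A) else 0 := by
      rw [Fintype.sum_subsingleton _ α]
      have : Partition.uProd u α α = 1 := by simp [Partition.uProd]
      rw [this]
    rw [h0] at h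
    exact h
  -- constraint sets
  set Sf : Fin n → Fin n → Fin (l'+1) → Finset (Fin n) :=
    fun a c i => if i = 0 then {a} else if i = j then {c} else Finset.univ with hSf
  set tailP : Fin n → (Fin (l'+1) → Fin n) → A :=
    fun c γ => (List.ofFn fun i : Fin l' =>
      if i.succ = j then u c (γ i.succ) else ∑ b, u b (γ i.succ)).prod with htailP
  set W : Fin n → Fin n → A :=
    fun b c => ∑ γ : Fin (l'+1) → Fin n, if D γ ∧ γ 0 = b then tailP c γ else 0 with hW
  set N : Fin n → Fin n → ℕ :=
    fun a c => ((Fintype.piFinset (Sf a c)).filter D).card with hN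
  have key : ∀ a c : Fin n, ((N a c : ℕ) : A) = ∑ b, u a b * W b c := by
    intro a c
    have step1 : ((N a c : ℕ) : A)
        = ∑ β ∈ Fintype.piFinset (Sf a c), (if D β then (1:A) else 0) := by
      rw [Finset.sum_boole]
    have step2 : ∑ β ∈ Fintype.piFinset (Sf a c), (if D β then (1:A) else 0)
        = ∑ γ : Fin (l'+1) → Fin n,
            if D γ then ∑ β ∈ Fintype.piFinset (Sf a c), Partition.uProd u β γ else 0 := by
      rw [Finset.sum_congr rfl fun β _ => hrel β, Finset.sum_comm]
      refine Finset.sum_congr rfl fun γ _ => ?_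
      by_cases hγ : D γ <;> simp [hγ]
    have step3 : ∀ γ : Fin (l'+1) → Fin n,
        ∑ β ∈ Fintype.piFinset (Sf a c), Partition.uProd u β γ
          = u a (γ 0) * tailP c γ := by
      intro γ
      have := sum_piFinset_ofFn_prod (Sf a c) (fun i b => u b (γ i))
      rw [show (∑ β ∈ Fintype.piFinset (Sf a c), Partition.uProd u β γ)
          = ∑ β ∈ Fintype.piFinset (Sf a c), (List.ofFn fun i => u (β i) (γ i)).prod from rfl,
        this, List.ofFn_succ, List.prod_cons]
      congr 1
      · simp [hSf]
      · refine congrArg List.prod (congrArg List.ofFn (funext fun i => ?_))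
        by_cases hij : i.succ = j <;> simp [hSf, Fin.succ_ne_zero i, hij, hjne]
    rw [step1, step2]
    have step4 : (∑ γ : Fin (l'+1) → Fin n,
          if D γ then ∑ β ∈ Fintype.piFinset (Sf a c), Partition.uProd u β γ else 0)
        = ∑ γ : Fin (l'+1) → Fin n, if D γ then u a (γ 0) * tailP c γ else 0 :=
      Finset.sum_congr rfl fun γ _ => by by_cases hγ : D γ <;> simp [hγ, step3 γ]
    rw [step4]
    -- regroup by γ 0
    have regroup : (∑ γ : Fin (l'+1) → Fin n, if D γ then u a (γ 0) * tailP c γ else 0)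
        = ∑ b, u a b * W b c := by
      have h1 : ∀ γ : Fin (l'+1) → Fin n,
          (if D γ then u a (γ 0) * tailP c γ else 0)
            = ∑ b, (if γ 0 = b then (if D γ then u a b * tailP c γ else 0) else 0) := by
        intro γ
        rw [Finset.sum_ite_eq]
        simp
      rw [Finset.sum_congr rfl fun γ _ => h1 γ, Finset.sum_comm]
      refine Finset.sum_congr rfl fun b _ => ?_
      rw [hW]
      rw [Finset.mul_sum]
      refine Finset.sum_congr rfl fun γ _ => ?_
      by_cases hγ : D γ <;> by_cases hb : γ 0 = b <;> simp [hγ, hb]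
    exact regroup
  have hNdiag : ∀ c : Fin n, N c c ≠ 0 := by
    intro c
    have hmem : (fun _ : Fin (l'+1) => c) ∈ (Fintype.piFinset (Sf c c)).filter D := by
      rw [Finset.mem_filter]
      refine ⟨?_, ?_⟩
      · rw [Fintype.mem_piFinset]
        intro i
        by_cases h0 : i = 0
        · simp [hSf, h0]
        · by_cases hj : i = j <;> simp [hSf, h0, hj]
      · intro x y _
        cases x with
        | inl x => exact x.elim0
        | inr x =>
          cases y with
          | inl y => exact y.elim0
          | inr y => rfl
    have : 0 < N c c := Finset.card_pos.2 ⟨_, hmem⟩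
    omega
  have hNoff : ∀ a c : Fin n, a ≠ c → N a c = 0 := by
    intro a c hac
    rw [hN, Finset.card_eq_zero, Finset.eq_empty_iff_forall_notMem]
    intro β hβ
    rw [Finset.mem_filter, Fintype.mem_piFinset] at hβ
    obtain ⟨hmem, hDβ⟩ := hβ
    have h0 : β 0 = a := by
      have := hmem 0
      simpa [hSf] using this
    have hj' : β j = c := by
      have := hmem j
      simpa [hSf, hjne] using this
    have := hDβ _ _ hpj
    simp only [Sum.elim_inr] at this
    apply hac
    rw [← h0, ← hj']
    convert this using 2
    rfl
  refine ⟨fun b c => ((N c c : ℂ))⁻¹ • W b c, ?_⟩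
  ext a c
  show (∑ b, Matrix.of u a b * (((N c c : ℂ))⁻¹ • W b c)) = (1 : Matrix (Fin n) (Fin n) A) a c
  have : (∑ b, Matrix.of u a b * (((N c c : ℂ))⁻¹ • W b c))
      = ((N c c : ℂ))⁻¹ • ∑ b, u a b * W b c := by
    rw [Finset.smul_sum]
    exact Finset.sum_congr rfl fun b _ => (mul_smul_comm _ _ _)
  rw [this, ← key a c]
  by_cases hac : a = c
  · subst hac
    have hcast : ((N a a : ℕ) : A) = ((N a a : ℕ) : ℂ) • (1 : A) := by
      rw [Nat.cast_smul_eq_nsmul]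
      simp
    rw [hcast, smul_smul, inv_mul_cancel₀ (Nat.cast_ne_zero.2 (hNdiag a)), one_smul,
      Matrix.one_apply_eq]
  · rw [hNoff a c hac]
    simp [Matrix.one_apply_ne hac]
end

section
/- Let n ∈ ℕ, k ≥ 2, and let q ∈ P(k,0) be a partition whose last (rightmost) upper point is not a singleton block. Let A be a unital C*-algebra and suppose the self-adjoint elements u_{ij} ∈ A (1 ≤ i,j ≤ n) fulfill the relations R(q). Then the matrix u = (u_{ij}) ∈ M_n(A) has a left inverse. -/
open scoped BigOperators

/-- If the self-adjoint elements `u i j` fulfill the relations `R(q)` for a partition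
`q ∈ P(k,0)` whose last (rightmost) upper point is not a singleton block, then the
matrix `u` has a left inverse in `M_n(A)`. -/
theorem leftInvertible_of_fulfillsR {n k : ℕ} (hk : 2 ≤ k) (q : PartitionKL k 0)
    (hlast : ∃ i : Fin k, (i : ℕ) ≠ k - 1 ∧ q.r (Sum.inl ⟨k - 1, by omega⟩) (Sum.inl i))
    {A : Type*} [CStarAlgebra A] (u : Fin n → Fin n → A)
    (hsa : ∀ i j, star (u i j) = u i j) (hu : Partition.FulfillsR q u) :
    ∃ V : Matrix (Fin n) (Fin n) A, V * Matrix.of u = 1 := by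
  classical
  obtain ⟨m, rfl⟩ : ∃ m, k = m + 1 := ⟨k - 1, by omega⟩
  obtain ⟨i0, hi0ne, hi0r⟩ := hlast
  have hi0ne' : (i0 : ℕ) ≠ m := by simpa using hi0ne
  have hi0r' : q.r (Sum.inl (Fin.last m)) (Sum.inl i0) := hi0r
  refine ⟨Matrix.of fun j b => ∑ γ : Fin (m + 1) → Fin n,
      if Partition.DeltaCond q γ default ∧ γ (Fin.last m) = b
      then (List.ofFn fun i : Fin m => u (γ i.castSucc) j).prod else 0, ?_⟩
  ext j a
  rw [Matrix.mul_apply, Matrix.one_apply]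
  set P : (Fin (m + 1) → Fin n) → A :=
    fun γ => (List.ofFn fun i : Fin m => u (γ i.castSucc) j).prod with hP
  set α : Fin (m + 1) → Fin n := fun i => if i = Fin.last m then a else j with hα
  have key := hu α default
  have hdelta : Partition.DeltaCond q α default ↔ j = a := by
    constructor
    · intro h
      have h2 := h (Sum.inl (Fin.last m)) (Sum.inl i0) hi0r'
      have hne : i0 ≠ Fin.last m := fun hc => hi0ne' (by rw [hc]; simp)
      simp only [Sum.elim_inl, hα, if_pos rfl, if_neg hne] at h2
      exact h2.symm
    · intro h x y _
      have hval : ∀ z : Fin (m + 1) ⊕ Fin 0, Sum.elim α default z = j := by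
        rintro (z | z)
        · simp only [Sum.elim_inl, hα]
          split <;> simp [h]
        · exact z.elim0
      rw [hval x, hval y]
  have hRHS : (∑ γ' : Fin 0 → Fin n,
      if Partition.DeltaCond q α γ' then Partition.uProd u default γ' else 0)
      = if j = a then (1 : A) else 0 := by
    rw [Fintype.sum_unique]
    simp [Partition.uProd, hdelta]
  rw [hRHS] at key
  rw [← key]
  have huprod : ∀ γ : Fin (m + 1) → Fin n,
      Partition.uProd u γ α = P γ * u (γ (Fin.last m)) a := by
    intro γ
    have h1 : α (Fin.last m) = a := if_pos rfl
    have h2 : ∀ i : Fin m, α i.castSucc = j := fun i => if_neg (Fin.castSucc_lt_last i).ne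
    rw [Partition.uProd, List.ofFn_succ', List.prod_concat, hP]
    simp only [h1, h2]
  calc (∑ b, (∑ γ : Fin (m + 1) → Fin n,
        if Partition.DeltaCond q γ default ∧ γ (Fin.last m) = b then P γ else 0)
          * Matrix.of u b a)
      = ∑ b, ∑ γ : Fin (m + 1) → Fin n,
          (if Partition.DeltaCond q γ default ∧ γ (Fin.last m) = b then P γ else 0)
            * u b a := by
        simp [Finset.sum_mul]
    _ = ∑ γ : Fin (m + 1) → Fin n, ∑ b,
          (if Partition.DeltaCond q γ default ∧ γ (Fin.last m) = b then P γ else 0)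
            * u b a := Finset.sum_comm
    _ = ∑ γ : Fin (m + 1) → Fin n,
          if Partition.DeltaCond q γ default then Partition.uProd u γ α else 0 := by
        refine Finset.sum_congr rfl fun γ _ => ?_
        by_cases hd : Partition.DeltaCond q γ default
        · simp only [hd, true_and, if_pos, huprod γ]
          rw [Finset.sum_congr rfl (fun b _ => by rw [ite_mul, zero_mul]),
            Finset.sum_ite_eq]
          simp
        · simp [hd]
end

section
/- Let n ∈ ℕ and k,l ≥ 2. Let p ∈ P(0,l) be a partition which is not the tensor power of l lower singletons (i.e., not every block of p is a singleton) and let q ∈ P(k,0) be a partition which is not the tensor power of k upper singletons. Let A be a unital C*-algebra and suppose the self-adjoint elements u_{ij} ∈ A (1 ≤ i,j ≤ n) fulfill the relations R(p) and R(q). Then the matrix u = (u_{ij}) is invertible in M_n(A). -/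
open scoped BigOperators

/-- A partition with `k` upper and `l` lower points, encoded as an equivalence
relation on the disjoint union of the points; the blocks of the partition are
the equivalence classes. -/
abbrev PointPartition (k l : ℕ) := Setoid (Fin k ⊕ Fin l)

namespace PointPartition

/-- `DeltaCond p α β` holds iff `δ_p(α,β) = 1`, i.e. the labelling of the upper
points by `α` and of the lower points by `β` is constant on every block of `p`. -/
def DeltaCond {k l n : ℕ} (p : PointPartition k l) (α : Fin k → Fin n) (β : Fin l → Fin n) : Prop :=
  ∀ x y : Fin k ⊕ Fin l, p.r x y → Sum.elim α β x = Sum.elim α β y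

/-- The ordered product `u_{γ₁α₁} ⋯ u_{γ_mα_m}`. -/
def uProd {m n : ℕ} {A : Type*} [Monoid A] (u : Fin n → Fin n → A) (γ α : Fin m → Fin n) : A :=
  (List.ofFn fun i : Fin m => u (γ i) (α i)).prod

open Classical in
/-- The elements `u i j` fulfill the relations `R(p)` associated to the partition `p`. -/
def FulfillsR {k l n : ℕ} {A : Type*} [Ring A] (p : PointPartition k l) (u : Fin n → Fin n → A) :
    Prop :=
  ∀ (α : Fin k → Fin n) (β : Fin l → Fin n),
    (∑ γ : Fin k → Fin n, if DeltaCond p γ β then uProd u γ α else 0)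
      = ∑ γ' : Fin l → Fin n, if DeltaCond p α γ' then uProd u β γ' else 0

end PointPartition

namespace InvAux

open Classical

variable {n : ℕ} {A : Type*}

def Const {l n : ℕ} (r : Fin l → Fin l → Prop) (γ : Fin l → Fin n) : Prop :=
  ∀ x y, r x y → γ x = γ y

noncomputable def Fsum [Ring A] {l : ℕ} (r : Fin l → Fin l → Prop)
    (w : Fin l → Fin n → A) : A :=
  ∑ γ : Fin l → Fin n, if Const r γ then (List.ofFn fun t => w t (γ t)).prod else 0

lemma ofFn_reverse {α : Type*} {l : ℕ} (f : Fin l → α) :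
    (List.ofFn f).reverse = List.ofFn (fun i => f i.rev) := by
  apply List.ext_getElem
  · simp
  · intro i h1 h2
    simp only [List.length_reverse, List.length_ofFn] at h1
    simp only [List.getElem_reverse, List.getElem_ofFn, List.length_ofFn]
    congr 1
    ext
    simp only [Fin.val_rev]
    omega

lemma star_list_prod [Monoid A] [StarMul A] :
    ∀ (L : List A), star L.prod = (L.map star).reverse.prod
  | [] => by simp
  | a :: L => by
    rw [List.prod_cons, star_mul, star_list_prod L, List.map_cons, List.reverse_cons,
      List.prod_append, List.prod_singleton]

lemma Fsum_succ [Ring A] {l : ℕ} (r : Fin (l+1) → Fin (l+1) → Prop)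
    (w : Fin (l+1) → Fin n → A) :
    Fsum r w = ∑ m : Fin n, w 0 m *
      ∑ γ : Fin l → Fin n, if Const r (Fin.cons m γ) then
        (List.ofFn fun t => w t.succ (γ t)).prod else 0 := by
  rw [Fsum]
  rw [← Equiv.sum_comp (Fin.consEquiv (fun _ : Fin (l+1) => Fin n))
    (fun γ => if Const r γ then (List.ofFn fun t => w t (γ t)).prod else 0)]
  rw [Fintype.sum_prod_type]
  refine Finset.sum_congr rfl fun m _ => ?_
  rw [Finset.mul_sum]
  refine Finset.sum_congr rfl fun γ _ => ?_
  simp only [Fin.consEquiv_apply]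
  rw [mul_ite, mul_zero]
  refine if_congr Iff.rfl ?_ rfl
  rw [List.ofFn_succ, List.prod_cons]
  simp only [Fin.cons_zero, Fin.cons_succ]

lemma const_cons_iff {l n : ℕ} {r : Fin (l+1) → Fin (l+1) → Prop} (req : Equivalence r)
    (h0 : ∀ y, r 0 y → y = 0) (m : Fin n) (γ : Fin l → Fin n) :
    Const r (Fin.cons m γ) ↔ Const (fun x y => r x.succ y.succ) γ := by
  constructor
  · intro h x y hxy
    have := h x.succ y.succ hxy
    simpa [Fin.cons_succ] using this
  · intro h x y hxy
    rcases Fin.eq_zero_or_eq_succ x with rfl | ⟨x', rfl⟩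
    · rcases h0 _ hxy with rfl
      rfl
    · rcases Fin.eq_zero_or_eq_succ y with rfl | ⟨y', rfl⟩
      · exact absurd (h0 _ (req.symm hxy)) (Fin.succ_ne_zero x')
      · simpa [Fin.cons_succ] using h x' y' hxy

lemma Fsum_succ_of_singleton [Ring A] {l : ℕ} {r : Fin (l+1) → Fin (l+1) → Prop}
    (req : Equivalence r) (h0 : ∀ y, r 0 y → y = 0) (w : Fin (l+1) → Fin n → A) :
    Fsum r w = (∑ m, w 0 m) * Fsum (fun x y => r x.succ y.succ) (fun t => w t.succ) := by
  rw [Fsum_succ, Finset.sum_mul]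
  refine Finset.sum_congr rfl fun m _ => ?_
  congr 1
  rw [Fsum]
  exact Finset.sum_congr rfl fun γ _ => if_congr (const_cons_iff req h0 m γ) rfl rfl

lemma star_Fsum [Ring A] [StarRing A] {l : ℕ} (r : Fin l → Fin l → Prop)
    (w : Fin l → Fin n → A) :
    star (Fsum r w) = Fsum (fun x y => r x.rev y.rev) (fun t m => star (w t.rev m)) := by
  rw [Fsum, Fsum, star_sum]
  let e : (Fin l → Fin n) ≃ (Fin l → Fin n) :=
    { toFun := fun γ t => γ t.rev
      invFun := fun γ t => γ t.rev
      left_inv := fun γ => funext fun t => by show γ t.rev.rev = γ t; rw [Fin.rev_rev]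
      right_inv := fun γ => funext fun t => by show γ t.rev.rev = γ t; rw [Fin.rev_rev] }
  rw [← Equiv.sum_comp e (fun γ => if Const (fun x y => r x.rev y.rev) γ then
    (List.ofFn fun t => star (w t.rev (γ t))).prod else 0)]
  refine Finset.sum_congr rfl fun γ _ => ?_
  have hC : Const r γ ↔ Const (fun x y => r x.rev y.rev) (e γ) := by
    constructor
    · intro h x y hxy
      exact h x.rev y.rev hxy
    · intro h x y hxy
      have := h x.rev y.rev (by simpa [Fin.rev_rev] using hxy)
      simpa [e, Fin.rev_rev] using this
  by_cases hc : Const r γ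
  · rw [if_pos hc, if_pos (hC.mp hc)]
    rw [star_list_prod, List.map_ofFn, ofFn_reverse]
    rfl
  · rw [if_neg hc, if_neg (fun h => hc (hC.mpr h)), star_zero]


lemma key [Ring A] [StarRing A] [NeZero n] (v : Fin n → Fin n → A)
    (hsav : ∀ i j, star (v i j) = v i j) :
    ∀ (l : ℕ) (r : Fin l → Fin l → Prop), Equivalence r → ∀ (e : ℕ),
    (∀ β : Fin l → Fin n,
        (∑ m, v 0 m) ^ e * Fsum r (fun t => v (β t)) = if Const r β then 1 else 0) →
    (∃ a b : Fin l, a ≠ b ∧ r a b) →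
    ((e = 0 ∧ ∃ a b : Fin l, (a : ℕ) = 0 ∧ a ≠ b ∧ r a b) ∨
      (∀ x y : Fin l, r x y → x ≠ y → (x : ℕ) + 1 < l)) →
    ∃ V : Fin n → Fin n → A, ∀ i j, (∑ m, v i m * V m j) = if i = j then 1 else 0 := by
  intro l
  induction l with
  | zero =>
    intro r _ e _ hns _
    obtain ⟨a, _, _, _⟩ := hns
    exact a.elim0
  | succ l IH =>
    intro r req e H hns hinv
    by_cases hA : ∃ b : Fin (l+1), b ≠ 0 ∧ r 0 b
    · -- point 0 lies in a non-singleton block : extract the inverse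
      obtain ⟨b, hb0, hrb⟩ := hA
      have hconst : ∀ (i j : Fin n),
          Const r (Fin.cons i (fun t => if r 0 t.succ then j else 0)) ↔ i = j := by
        intro i j
        constructor
        · intro h
          obtain ⟨b', rfl⟩ := Fin.eq_succ_of_ne_zero hb0
          have := h 0 b'.succ hrb
          simp only [Fin.cons_zero, Fin.cons_succ] at this
          rwa [if_pos hrb] at this
        · rintro rfl
          intro x y hxy
          have hval : ∀ x : Fin (l+1),
              (Fin.cons i (fun t => if r 0 t.succ then i else 0) : Fin (l+1) → Fin n) x
              = if r 0 x then i else (0 : Fin n) := by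
            intro x
            rcases Fin.eq_zero_or_eq_succ x with rfl | ⟨x', rfl⟩
            · simp [req.refl 0]
            · simp [Fin.cons_succ]
          rw [hval x, hval y]
          by_cases h0x : r 0 x
          · rw [if_pos h0x, if_pos (req.trans h0x hxy)]
          · rw [if_neg h0x, if_neg fun h0y => h0x (req.trans h0y (req.symm hxy))]
      have main : ∀ i j : Fin n,
          (∑ m, v 0 m) ^ e * ∑ m, v i m * (∑ γ : Fin l → Fin n,
            if Const r (Fin.cons m γ) then
              (List.ofFn fun t => v (if r 0 t.succ then j else 0) (γ t)).prod else 0)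
          = if i = j then 1 else 0 := by
        intro i j
        have hH := H (Fin.cons i (fun t => if r 0 t.succ then j else 0))
        rw [Fsum_succ] at hH
        simp only [Fin.cons_zero, Fin.cons_succ] at hH
        rwa [if_congr (hconst i j) rfl rfl] at hH
      have hunit : IsUnit ((∑ m, v 0 m) ^ e) := by
        rcases Nat.eq_zero_or_pos e with rfl | he
        · simpa using isUnit_one
        · have hTS : ∀ x y : Fin (l+1), r x y → x ≠ y → (x : ℕ) + 1 < l + 1 := by
            rcases hinv with ⟨he0, _⟩ | h
            · exact absurd he0 (by omega)
            · exact h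
          have h1 : (∑ m, v 0 m) ^ e * Fsum r (fun _ => v 0) = 1 := by
            have := H (fun _ => 0)
            rwa [if_pos (show Const r (fun _ => (0 : Fin n)) from fun x y _ => rfl)] at this
          have hss : star ((∑ m, v 0 m) ^ e) = (∑ m, v 0 m) ^ e := by
            rw [star_pow]
            congr 1
            rw [star_sum]
            exact Finset.sum_congr rfl fun m _ => hsav 0 m
          have h2 : Fsum (fun x y : Fin (l+1) => r x.rev y.rev) (fun _ => v 0)
              * (∑ m, v 0 m) ^ e = 1 := by
            have hst := congrArg star h1
            rw [star_mul, star_one, star_Fsum, hss] at hst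
            have hfun : (fun (t : Fin (l+1)) (m : Fin n) => star ((fun _ => v 0) (t.rev) m))
                = fun _ => v 0 := by
              funext t m
              exact hsav 0 m
            rwa [hfun] at hst
          have req' : Equivalence (fun x y : Fin (l+1) => r x.rev y.rev) :=
            ⟨fun x => req.refl _, fun h => req.symm h, fun h1 h2 => req.trans h1 h2⟩
          have h0rev : ∀ y : Fin (l+1), (fun x y : Fin (l+1) => r x.rev y.rev) 0 y → y = 0 := by
            intro y hy
            by_contra hne
            have hxy : (Fin.rev 0 : Fin (l+1)) ≠ y.rev := by
              intro h
              exact hne (by rw [← Fin.rev_rev (0 : Fin (l+1)), h, Fin.rev_rev])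
            have := hTS _ _ hy hxy
            have hv : ((Fin.rev 0 : Fin (l+1)) : ℕ) = l := by
              simp [Fin.val_rev]
            omega
          rw [Fsum_succ_of_singleton req' h0rev] at h2
          -- h2 : ((∑ m, v 0 m) * Y) * (∑ m, v 0 m)^e = 1
          obtain ⟨e', rfl⟩ : ∃ e', e = e' + 1 := ⟨e - 1, by omega⟩
          set s : A := ∑ m, v 0 m with hs
          set Y : A := Fsum (fun x y : Fin l =>
            (fun x y : Fin (l+1) => r x.rev y.rev) x.succ y.succ)
            (fun t => (fun _ : Fin (l+1) => v 0) t.succ) with hY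
          have hr1 : s * (Y * s ^ (e' + 1)) = 1 := by
            rw [← mul_assoc]
            exact h2
          have hl1 : (s * Y * s ^ e') * s = 1 := by
            rw [mul_assoc (s * Y), ← pow_succ]
            exact h2
          have h3 : s * Y * s ^ e' = Y * s ^ (e' + 1) := by
            calc s * Y * s ^ e' = (s * Y * s ^ e') * (s * (Y * s ^ (e' + 1))) := by
                  rw [hr1, mul_one]
            _ = ((s * Y * s ^ e') * s) * (Y * s ^ (e' + 1)) :=
                  (mul_assoc (s * Y * s ^ e') s (Y * s ^ (e' + 1))).symm
            _ = Y * s ^ (e' + 1) := by rw [hl1, one_mul]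
          have hsu : IsUnit s := ⟨⟨s, Y * s ^ (e' + 1), hr1, by rw [← h3]; exact hl1⟩, rfl⟩
          exact hsu.pow _
      obtain ⟨wu, hwu⟩ := hunit
      refine ⟨fun m j => (∑ γ : Fin l → Fin n,
          if Const r (Fin.cons m γ) then
            (List.ofFn fun t => v (if r 0 t.succ then j else 0) (γ t)).prod else 0)
          * (∑ m, v 0 m) ^ e, fun i j => ?_⟩
      have hD : (∑ m, v i m * (∑ γ : Fin l → Fin n,
          if Const r (Fin.cons m γ) then
            (List.ofFn fun t => v (if r 0 t.succ then j else 0) (γ t)).prod else 0))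
          = ↑wu⁻¹ * (if i = j then 1 else 0) := by
        rw [← main i j, ← hwu, ← mul_assoc, Units.inv_mul, one_mul]
      calc (∑ m, v i m * ((∑ γ : Fin l → Fin n,
          if Const r (Fin.cons m γ) then
            (List.ofFn fun t => v (if r 0 t.succ then j else 0) (γ t)).prod else 0)
          * (∑ m, v 0 m) ^ e))
          = (∑ m, v i m * (∑ γ : Fin l → Fin n,
            if Const r (Fin.cons m γ) then
              (List.ofFn fun t => v (if r 0 t.succ then j else 0) (γ t)).prod else 0))
            * (∑ m, v 0 m) ^ e := by
              rw [Finset.sum_mul]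
              exact Finset.sum_congr rfl fun m _ => (mul_assoc _ _ _).symm
      _ = (↑wu⁻¹ * (if i = j then 1 else 0)) * ↑wu := by rw [hD, hwu]
      _ = (if i = j then 1 else 0) := by
            split_ifs
            · rw [mul_one, Units.inv_mul]
            · rw [mul_zero, zero_mul]
    · -- point 0 is a singleton : peel it off
      push_neg at hA
      have h0 : ∀ y, r 0 y → y = 0 := by
        intro y hy
        by_contra hne
        exact hA y hne hy
      have req' : Equivalence (fun x y : Fin l => r x.succ y.succ) :=
        ⟨fun x => req.refl _, fun h => req.symm h, fun h1 h2 => req.trans h1 h2⟩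
      have H' : ∀ β : Fin l → Fin n,
          (∑ m, v 0 m) ^ (e + 1) * Fsum (fun x y : Fin l => r x.succ y.succ)
            (fun t => v (β t)) = if Const (fun x y : Fin l => r x.succ y.succ) β
              then 1 else 0 := by
        intro β
        have hH := H (Fin.cons 0 β)
        rw [Fsum_succ_of_singleton req h0] at hH
        simp only [Fin.cons_zero, Fin.cons_succ] at hH
        rw [← mul_assoc, ← pow_succ] at hH
        rwa [if_congr (const_cons_iff req h0 (0 : Fin n) β) rfl rfl] at hH
      have hns' : ∃ a b : Fin l, a ≠ b ∧ r a.succ b.succ := by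
        obtain ⟨a, b, hab, hr⟩ := hns
        have ha : a ≠ 0 := by
          rintro rfl
          exact hab (h0 b hr).symm
        have hb : b ≠ 0 := by
          rintro rfl
          exact hab (h0 a (req.symm hr))
        obtain ⟨a', rfl⟩ := Fin.eq_succ_of_ne_zero ha
        obtain ⟨b', rfl⟩ := Fin.eq_succ_of_ne_zero hb
        exact ⟨a', b', fun h => hab (by rw [h]), hr⟩
      have hTS : ∀ x y : Fin (l+1), r x y → x ≠ y → (x : ℕ) + 1 < l + 1 := by
        rcases hinv with ⟨he0, a, b, ha0, hab, hrab⟩ | h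
        · exfalso
          have ha : a = 0 := by
            ext
            simpa using ha0
          subst ha
          exact hab (h0 b hrab).symm
        · exact h
      have hTS' : ∀ x y : Fin l, r x.succ y.succ → x ≠ y → (x : ℕ) + 1 < l := by
        intro x y h hne
        have := hTS x.succ y.succ h (by simpa [Fin.succ_inj] using hne)
        simpa [Fin.val_succ] using this
      exact IH _ req' (e + 1) H' hns' (Or.inr hTS')

lemma extract [Ring A] [StarRing A] [NeZero n] {l : ℕ} (v : Fin n → Fin n → A)
    (hsav : ∀ i j, star (v i j) = v i j)
    (r : Fin l → Fin l → Prop) (req : Equivalence r)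
    (H : ∀ β : Fin l → Fin n, Fsum r (fun t => v (β t)) = if Const r β then 1 else 0)
    (hns : ∃ a b : Fin l, a ≠ b ∧ r a b) :
    ∃ V : Fin n → Fin n → A, ∀ i j, (∑ m, v i m * V m j) = if i = j then 1 else 0 := by
  cases l with
  | zero =>
    obtain ⟨a, _, _, _⟩ := hns
    exact a.elim0
  | succ l' =>
    by_cases hA : ∃ b : Fin (l'+1), b ≠ 0 ∧ r 0 b
    · obtain ⟨b, hb0, hrb⟩ := hA
      exact key v hsav _ r req 0
        (fun β => by rw [pow_zero, one_mul]; exact H β) hns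
        (Or.inl ⟨rfl, 0, b, rfl, Ne.symm hb0, hrb⟩)
    · by_cases hTS : ∀ x y : Fin (l'+1), r x y → x ≠ y → (x : ℕ) + 1 < l' + 1
      · exact key v hsav _ r req 0
          (fun β => by rw [pow_zero, one_mul]; exact H β) hns (Or.inr hTS)
      · push_neg at hTS
        obtain ⟨x, y, hr, hne, hge⟩ := hTS
        have req'' : Equivalence (fun a b : Fin (l'+1) => r a.rev b.rev) :=
          ⟨fun a => req.refl _, fun h => req.symm h, fun h1 h2 => req.trans h1 h2⟩
        have H'' : ∀ β : Fin (l'+1) → Fin n,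
            Fsum (fun a b : Fin (l'+1) => r a.rev b.rev) (fun t => v (β t))
              = if Const (fun a b : Fin (l'+1) => r a.rev b.rev) β then 1 else 0 := by
          intro β
          have h1 := congrArg star (H (fun t => β t.rev))
          rw [star_Fsum] at h1
          have h2 : (fun (t : Fin (l'+1)) (m : Fin n) =>
              star ((fun t' => v ((fun t'' => β t''.rev) t')) t.rev m)) = fun t => v (β t) := by
            funext t m
            simp only [Fin.rev_rev]
            exact hsav _ m
          rw [h2] at h1
          rw [h1]
          have hC : Const r (fun t => β t.rev)
              ↔ Const (fun a b : Fin (l'+1) => r a.rev b.rev) β := by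
            constructor
            · intro h a b hab
              have := h a.rev b.rev hab
              simpa [Fin.rev_rev] using this
            · intro h a b hab
              exact h a.rev b.rev (by simpa [Fin.rev_rev] using hab)
          by_cases hc : Const r (fun t => β t.rev)
          · rw [if_pos hc, if_pos (hC.mp hc), star_one]
          · rw [if_neg hc, if_neg (fun h => hc (hC.mpr h)), star_zero]
        have hvx : (x : ℕ) = l' := by
          have := x.isLt
          omega
        have hxrev : ((x.rev : Fin (l'+1)) : ℕ) = 0 := by
          simp [Fin.val_rev]
          omega
        refine key v hsav _ _ req'' 0
          (fun β => by rw [pow_zero, one_mul]; exact H'' β)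
          ⟨x.rev, y.rev, ?_, ?_⟩ (Or.inl ⟨rfl, x.rev, y.rev, hxrev, ?_, ?_⟩)
        · intro h
          exact hne (by rw [← Fin.rev_rev x, h, Fin.rev_rev])
        · simpa [Fin.rev_rev] using hr
        · intro h
          exact hne (by rw [← Fin.rev_rev x, h, Fin.rev_rev])
        · simpa [Fin.rev_rev] using hr

end InvAux

/-- If the self-adjoint elements `u i j` fulfill the relations `R(p)` and `R(q)` for a
partition `p ∈ P(0,l)` which is not a tensor power of lower singletons and a partition
`q ∈ P(k,0)` which is not a tensor power of upper singletons (`k, l ≥ 2`), then the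
matrix `u` is invertible in `M_n(A)`. -/
theorem invertible_of_fulfillsR {n k l : ℕ} (hl : 2 ≤ l) (hk : 2 ≤ k)
    (p : PointPartition 0 l) (hp_ns : ∃ x y : Fin 0 ⊕ Fin l, x ≠ y ∧ p.r x y)
    (q : PointPartition k 0) (hq_ns : ∃ x y : Fin k ⊕ Fin 0, x ≠ y ∧ q.r x y)
    {A : Type*} [CStarAlgebra A] (u : Fin n → Fin n → A)
    (hsa : ∀ i j, star (u i j) = u i j)
    (hup : PointPartition.FulfillsR p u) (huq : PointPartition.FulfillsR q u) :
    ∃ V : Matrix (Fin n) (Fin n) A, Matrix.of u * V = 1 ∧ V * Matrix.of u = 1 := by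
  classical
  rcases Nat.eq_zero_or_pos n with rfl | hn
  · exact ⟨1, by ext i j; exact i.elim0, by ext i j; exact i.elim0⟩
  haveI : NeZero n := ⟨hn.ne'⟩
  haveI hsub0 : Subsingleton (Fin 0 → Fin n) := ⟨fun a b => funext fun i => i.elim0⟩
  -- the p side : lower points
  set rl : Fin l → Fin l → Prop := fun x y => p.r (Sum.inr x) (Sum.inr y) with hrl
  have reql : Equivalence rl :=
    ⟨fun x => p.iseqv.refl _, fun h => p.iseqv.symm h, fun h1 h2 => p.iseqv.trans h1 h2⟩
  have hdl : ∀ (α : Fin 0 → Fin n) (β : Fin l → Fin n),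
      p.DeltaCond α β ↔ InvAux.Const rl β := by
    intro α β
    constructor
    · intro h x y hxy
      exact h (Sum.inr x) (Sum.inr y) hxy
    · intro h x y hxy
      cases x with
      | inl a => exact a.elim0
      | inr a =>
        cases y with
        | inl b => exact b.elim0
        | inr b => exact h a b hxy
  have Hp : ∀ β : Fin l → Fin n,
      InvAux.Fsum rl (fun t => u (β t)) = if InvAux.Const rl β then 1 else 0 := by
    intro β
    have h := hup (fun i => i.elim0) β
    rw [Fintype.sum_subsingleton _ (fun i : Fin 0 => i.elim0)] at h
    calc InvAux.Fsum rl (fun t => u (β t))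
        = ∑ γ' : Fin l → Fin n, if p.DeltaCond (fun i => i.elim0) γ' then
            PointPartition.uProd u β γ' else 0 := by
          rw [InvAux.Fsum]
          exact Finset.sum_congr rfl fun γ' _ =>
            if_congr (hdl (fun i => i.elim0) γ').symm rfl rfl
    _ = if p.DeltaCond (fun i => i.elim0) β then
          PointPartition.uProd u (fun i => i.elim0) (fun i => i.elim0) else 0 := h.symm
    _ = if InvAux.Const rl β then 1 else 0 := by
          refine if_congr (hdl _ β) ?_ rfl
          simp [PointPartition.uProd]
  obtain ⟨V0, hV0⟩ := InvAux.extract u hsa rl reql Hp (by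
    obtain ⟨x, y, hne, hr⟩ := hp_ns
    cases x with
    | inl a => exact a.elim0
    | inr a =>
      cases y with
      | inl b => exact b.elim0
      | inr b => exact ⟨a, b, fun h => hne (by rw [h]), hr⟩)
  -- the q side : upper points
  set ru : Fin k → Fin k → Prop := fun x y => q.r (Sum.inl x) (Sum.inl y) with hru
  have requ : Equivalence ru :=
    ⟨fun x => q.iseqv.refl _, fun h => q.iseqv.symm h, fun h1 h2 => q.iseqv.trans h1 h2⟩
  have hdu : ∀ (α : Fin k → Fin n) (β : Fin 0 → Fin n),
      q.DeltaCond α β ↔ InvAux.Const ru α := by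
    intro α β
    constructor
    · intro h x y hxy
      exact h (Sum.inl x) (Sum.inl y) hxy
    · intro h x y hxy
      cases x with
      | inr a => exact a.elim0
      | inl a =>
        cases y with
        | inr b => exact b.elim0
        | inl b => exact h a b hxy
  have Hq : ∀ α : Fin k → Fin n,
      InvAux.Fsum ru (fun t m => u m (α t)) = if InvAux.Const ru α then 1 else 0 := by
    intro α
    have h := huq α (fun i => i.elim0)
    rw [Fintype.sum_subsingleton _ (fun i : Fin 0 => i.elim0)] at h
    calc InvAux.Fsum ru (fun t m => u m (α t))
        = ∑ γ : Fin k → Fin n, if q.DeltaCond γ (fun i => i.elim0) then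
            PointPartition.uProd u γ α else 0 := by
          rw [InvAux.Fsum]
          exact Finset.sum_congr rfl fun γ _ =>
            if_congr (hdu γ (fun i => i.elim0)).symm rfl rfl
    _ = if q.DeltaCond α (fun i => i.elim0) then
          PointPartition.uProd u (fun i => i.elim0) (fun i => i.elim0) else 0 := h
    _ = if InvAux.Const ru α then 1 else 0 := by
          refine if_congr (hdu α _) ?_ rfl
          simp [PointPartition.uProd]
  obtain ⟨W0, hW0⟩ := InvAux.extract (fun c m => u m c) (fun c m => hsa m c) ru requ Hq (by
    obtain ⟨x, y, hne, hr⟩ := hq_ns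
    cases x with
    | inr a => exact a.elim0
    | inl a =>
      cases y with
      | inr b => exact b.elim0
      | inl b => exact ⟨a, b, fun h => hne (by rw [h]), hr⟩)
  -- assemble the matrices
  have hUV : Matrix.of u * Matrix.of V0 = 1 := by
    ext i j
    rw [Matrix.mul_apply, Matrix.one_apply]
    exact hV0 i j
  have hWU : Matrix.of (fun j m => star (W0 m j)) * Matrix.of u = 1 := by
    ext j i
    rw [Matrix.mul_apply, Matrix.one_apply]
    have h := congrArg star (hW0 i j)
    rw [star_sum] at h
    simp only [star_mul, hsa] at h
    -- h : ∑ m, star (W0 m j) * u m i = star (if i = j then 1 else 0)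
    by_cases hij : i = j
    · subst hij
      rw [if_pos rfl]
      rw [if_pos rfl, star_one] at h
      exact h
    · rw [if_neg (fun hji => hij hji.symm)]
      rw [if_neg hij, star_zero] at h
      exact h
  have hWV : Matrix.of (fun j m => star (W0 m j)) = Matrix.of V0 := by
    calc Matrix.of (fun j m => star (W0 m j))
        = Matrix.of (fun j m => star (W0 m j)) * (Matrix.of u * Matrix.of V0) := by
          rw [hUV, mul_one]
    _ = (Matrix.of (fun j m => star (W0 m j)) * Matrix.of u) * Matrix.of V0 := by
          rw [mul_assoc]
    _ = Matrix.of V0 := by rw [hWU, one_mul]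
  exact ⟨Matrix.of V0, hUV, by rw [← hWV]; exact hWU⟩
end

section
/- Let C be a generalized category of partitions, let p ∈ P(0,l) with p ∈ C, and let q ∈ P(k,0) with q ∈ C and q* ∈ C such that q* is not the tensor power of k lower singletons (i.e., q has a block of size at least two). Then every line rotated version of p belongs to C. -/
open scoped BigOperators

/-- A partition with `k` upper and `l` lower points, encoded as an equivalence
relation on the disjoint union of the points; the blocks of the partition are
the equivalence classes. -/
abbrev CatPartition (k l : ℕ) := Setoid (Fin k ⊕ Fin l)

namespace CatPartition

/-- `DeltaCond p α β` holds iff `δ_p(α,β) = 1`, i.e. the labelling of the upper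
points by `α` and of the lower points by `β` is constant on every block of `p`. -/
def DeltaCond {k l n : ℕ} (p : CatPartition k l) (α : Fin k → Fin n) (β : Fin l → Fin n) : Prop :=
  ∀ x y : Fin k ⊕ Fin l, p.r x y → Sum.elim α β x = Sum.elim α β y

/-- The ordered product `u_{γ₁α₁} ⋯ u_{γ_mα_m}`. -/
def uProd {m n : ℕ} {A : Type*} [Monoid A] (u : Fin n → Fin n → A) (γ α : Fin m → Fin n) : A :=
  (List.ofFn fun i : Fin m => u (γ i) (α i)).prod

open Classical in
/-- The elements `u i j` fulfill the relations `R(p)` associated to the partition `p`. -/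
def FulfillsR {k l n : ℕ} {A : Type*} [Ring A] (p : CatPartition k l) (u : Fin n → Fin n → A) :
    Prop :=
  ∀ (α : Fin k → Fin n) (β : Fin l → Fin n),
    (∑ γ : Fin k → Fin n, if DeltaCond p γ β then uProd u γ α else 0)
      = ∑ γ' : Fin l → Fin n, if DeltaCond p α γ' then uProd u β γ' else 0

end CatPartition
namespace CatPartition

/-- The disjoint sum of two setoids. -/
protected def sumSetoid {α β : Type*} (s : Setoid α) (t : Setoid β) : Setoid (α ⊕ β) :=
  Setoid.ker (Sum.map (Quotient.mk s) (Quotient.mk t))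

/-- The tensor product (horizontal concatenation) of two partitions. -/
def tensorPart {k l k' l' : ℕ} (p : CatPartition k l) (q : CatPartition k' l') :
    CatPartition (k + k') (l + l') :=
  Setoid.comap
    (Sum.elim
      (fun a : Fin (k + k') =>
        (Sum.map (Sum.inl : Fin k → Fin k ⊕ Fin l) (Sum.inl : Fin k' → Fin k' ⊕ Fin l')
          (finSumFinEquiv.symm a)))
      (fun b : Fin (l + l') =>
        (Sum.map (Sum.inr : Fin l → Fin k ⊕ Fin l) (Sum.inr : Fin l' → Fin k' ⊕ Fin l')
          (finSumFinEquiv.symm b))))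
    (CatPartition.sumSetoid p q)

/-- The composition `qp ∈ P(k,m)` of `p ∈ P(k,l)` with `q ∈ P(l,m)`: the lower points
of `p` are identified with the upper points of `q`, blocks that become connected are
joined, and the middle points are deleted. -/
def compPart {k l m : ℕ} (q : CatPartition l m) (p : CatPartition k l) : CatPartition k m :=
  Setoid.comap (Sum.map (id : Fin k → Fin k) (Sum.inr : Fin m → Fin l ⊕ Fin m))
    ((Setoid.ker fun x : Fin k ⊕ (Fin l ⊕ Fin m) =>
        Sum.map (Quotient.mk p) (id : Fin m → Fin m)
          ((Equiv.sumAssoc (Fin k) (Fin l) (Fin m)).symm x))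
      ⊔ Setoid.ker (Sum.map (id : Fin k → Fin k) (Quotient.mk q)))

/-- The vertical reflection of a partition: the left-to-right order of the upper points
and of the lower points is reversed. -/
def reflPart {k l : ℕ} (p : CatPartition k l) : CatPartition k l :=
  Setoid.comap (Sum.map (Fin.rev : Fin k → Fin k) (Fin.rev : Fin l → Fin l)) p

/-- The involution `p* ∈ P(l,k)` of `p ∈ P(k,l)`: upper and lower points are interchanged. -/
def invPart {k l : ℕ} (p : CatPartition k l) : CatPartition l k :=
  Setoid.comap (Sum.swap : Fin l ⊕ Fin k → Fin k ⊕ Fin l) p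

/-- The `r`-fold tensor power of the identity partition: the `i`-th upper point is
connected to the `i`-th lower point. In particular `idPow 1` is the identity partition. -/
def idPow (r : ℕ) : CatPartition r r := Setoid.ker (Sum.elim (id : Fin r → Fin r) id)

/-- Transport a partition along equalities of the numbers of points. -/
def castPart {k l k' l' : ℕ} (hk : k = k') (hl : l = l') (p : CatPartition k l) :
    CatPartition k' l' :=
  Setoid.comap (Sum.map (Fin.cast hk.symm) (Fin.cast hl.symm)) p

/-- The partition `b_m ∈ P(0,m)` whose single block consists of all `m` lower points. -/
def bm (m : ℕ) : CatPartition 0 m := ⊤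

end CatPartition
/-- A generalized category of partitions: it contains the identity partition and is
closed under tensor products, compositions and vertical reflections. -/
structure IsGenCategory (C : ∀ k l : ℕ, Set (CatPartition k l)) : Prop where
  id_mem : CatPartition.idPow 1 ∈ C 1 1
  tensor_mem : ∀ {k l k' l' : ℕ} (p : CatPartition k l) (q : CatPartition k' l'),
      p ∈ C k l → q ∈ C k' l' → CatPartition.tensorPart p q ∈ C (k + k') (l + l')
  comp_mem : ∀ {k l m : ℕ} (p : CatPartition k l) (q : CatPartition l m),
      p ∈ C k l → q ∈ C l m → CatPartition.compPart q p ∈ C k m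
  refl_mem : ∀ {k l : ℕ} (p : CatPartition k l), p ∈ C k l → CatPartition.reflPart p ∈ C k l

namespace CatPartition

/-- `p'` is a line rotated version of `p ∈ P(0,l)`: for all `2 ≤ i < j ≤ l` the points
`i` and `j` lie in the same block of `p` iff `i-1` and `j-1` lie in the same block of
`p'`, and for all `2 ≤ j ≤ l` the points `1` and `j` lie in the same block of `p` iff
`j-1` and `l` lie in the same block of `p'` (here points are labelled `1,…,l`). -/
def IsLineRotated {l : ℕ} (p p' : CatPartition 0 l) : Prop :=
  (∀ i j : Fin l, 0 < (i : ℕ) → (i : ℕ) < (j : ℕ) →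
      (p.r (Sum.inr i) (Sum.inr j) ↔
        p'.r (Sum.inr ⟨(i : ℕ) - 1, lt_of_le_of_lt (Nat.sub_le _ _) i.isLt⟩)
          (Sum.inr ⟨(j : ℕ) - 1, lt_of_le_of_lt (Nat.sub_le _ _) j.isLt⟩)))
  ∧ ∀ j : Fin l, 0 < (j : ℕ) →
      (p.r (Sum.inr ⟨0, Nat.lt_of_le_of_lt (Nat.zero_le _) j.isLt⟩) (Sum.inr j) ↔
        p'.r (Sum.inr ⟨(j : ℕ) - 1, lt_of_le_of_lt (Nat.sub_le _ _) j.isLt⟩)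
          (Sum.inr ⟨l - 1, Nat.sub_lt (Nat.lt_of_le_of_lt (Nat.zero_le _) j.isLt) Nat.one_pos⟩))

end CatPartition


/-! ### Auxiliary development for the line rotation theorem -/

namespace LineRot

open CatPartition

/-! #### Generalities on setoids on sums -/

section SumSetoid

variable {k l k' l' : ℕ}

theorem partition_zero_zero_eq (p q : CatPartition 0 0) : p = q :=
  Setoid.ext fun x => x.elim Fin.elim0 Fin.elim0

theorem sumSetoid_inl_inl {α β : Type*} (s : Setoid α) (t : Setoid β) (a b : α) :
    (CatPartition.sumSetoid s t).r (Sum.inl a) (Sum.inl b) ↔ s.r a b := by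
  constructor
  · intro h
    have h' : (Quotient.mk s a : Quotient s) = Quotient.mk s b := by
      have h2 : Sum.map (Quotient.mk s) (Quotient.mk t) (Sum.inl a)
          = Sum.map (Quotient.mk s) (Quotient.mk t) (Sum.inl b) := h
      simpa using h2
    exact Quotient.exact h'
  · intro h
    show Sum.map _ _ _ = Sum.map _ _ _
    simp only [Sum.map_inl]
    exact congrArg Sum.inl (Quotient.sound h)

theorem sumSetoid_inr_inr {α β : Type*} (s : Setoid α) (t : Setoid β) (a b : β) :
    (CatPartition.sumSetoid s t).r (Sum.inr a) (Sum.inr b) ↔ t.r a b := by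
  constructor
  · intro h
    have h' : (Quotient.mk t a : Quotient t) = Quotient.mk t b := by
      have h2 : Sum.map (Quotient.mk s) (Quotient.mk t) (Sum.inr a)
          = Sum.map (Quotient.mk s) (Quotient.mk t) (Sum.inr b) := h
      simpa using h2
    exact Quotient.exact h'
  · intro h
    show Sum.map _ _ _ = Sum.map _ _ _
    simp only [Sum.map_inr]
    exact congrArg Sum.inr (Quotient.sound h)

theorem sumSetoid_inl_inr {α β : Type*} (s : Setoid α) (t : Setoid β) (a : α) (b : β) :
    ¬ (CatPartition.sumSetoid s t).r (Sum.inl a) (Sum.inr b) := by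
  intro h
  have h' : Sum.map (Quotient.mk s) (Quotient.mk t) (Sum.inl a)
      = Sum.map (Quotient.mk s) (Quotient.mk t) (Sum.inr b) := h
  simp only [Sum.map_inl, Sum.map_inr] at h'
  exact Sum.inl_ne_inr h'

end SumSetoid

/-! #### The tensor product relation -/

section Tensor

variable {k l k' l' : ℕ} (p : CatPartition k l) (q : CatPartition k' l')

/-- Reassembling a point of the disjoint union into a point of the tensor product. -/
def glue : (Fin k ⊕ Fin l) ⊕ (Fin k' ⊕ Fin l') → Fin (k + k') ⊕ Fin (l + l')
  | Sum.inl (Sum.inl i) => Sum.inl (Fin.castAdd k' i)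
  | Sum.inl (Sum.inr j) => Sum.inr (Fin.castAdd l' j)
  | Sum.inr (Sum.inl i) => Sum.inl (Fin.natAdd k i)
  | Sum.inr (Sum.inr j) => Sum.inr (Fin.natAdd l j)

theorem tensor_rel_glue (x y : (Fin k ⊕ Fin l) ⊕ (Fin k' ⊕ Fin l')) :
    (tensorPart p q).r (glue x) (glue y) ↔ (CatPartition.sumSetoid p q).r x y := by
  have hF : ∀ z : (Fin k ⊕ Fin l) ⊕ (Fin k' ⊕ Fin l'),
      (Sum.elim
        (fun a : Fin (k + k') =>
          (Sum.map (Sum.inl : Fin k → Fin k ⊕ Fin l) (Sum.inl : Fin k' → Fin k' ⊕ Fin l')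
            (finSumFinEquiv.symm a)))
        (fun b : Fin (l + l') =>
          (Sum.map (Sum.inr : Fin l → Fin k ⊕ Fin l) (Sum.inr : Fin l' → Fin k' ⊕ Fin l')
            (finSumFinEquiv.symm b)))) (glue z) = z := by
    rintro ((i | i) | (i | i)) <;>
      simp [glue, finSumFinEquiv_symm_apply_castAdd, finSumFinEquiv_symm_apply_natAdd]
  show (CatPartition.sumSetoid p q).r _ _ ↔ _
  rw [hF x, hF y]

theorem tensor_rel_ll (i : Fin l) (j : Fin l) :
    (tensorPart p q).r (Sum.inr (Fin.castAdd l' i)) (Sum.inr (Fin.castAdd l' j))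
      ↔ p.r (Sum.inr i) (Sum.inr j) := by
  have := tensor_rel_glue p q (Sum.inl (Sum.inr i)) (Sum.inl (Sum.inr j))
  simpa [glue, sumSetoid_inl_inl] using this

theorem tensor_rel_rr (i : Fin l') (j : Fin l') :
    (tensorPart p q).r (Sum.inr (Fin.natAdd l i)) (Sum.inr (Fin.natAdd l j))
      ↔ q.r (Sum.inr i) (Sum.inr j) := by
  have := tensor_rel_glue p q (Sum.inr (Sum.inr i)) (Sum.inr (Sum.inr j))
  simpa [glue, sumSetoid_inr_inr] using this

end Tensor

/-! #### idPow and castPart -/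

section IdCast

theorem idPow_rel_iff (r : ℕ) (x y : Fin r ⊕ Fin r) :
    (idPow r).r x y ↔ Sum.elim (id : Fin r → Fin r) id x = Sum.elim id id y := Iff.rfl

theorem castPart_rel_iff {k l k' l' : ℕ} (hk : k = k') (hl : l = l') (p : CatPartition k l)
    (x y : Fin k' ⊕ Fin l') :
    (castPart hk hl p).r x y ↔
      p.r (Sum.map (Fin.cast hk.symm) (Fin.cast hl.symm) x)
        (Sum.map (Fin.cast hk.symm) (Fin.cast hl.symm) y) := Iff.rfl

theorem castPart_rfl_rfl {k l : ℕ} (p : CatPartition k l) : castPart rfl rfl p = p := by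
  apply Setoid.ext
  intro x y
  rw [castPart_rel_iff]
  rcases x with i | i <;> rcases y with j | j <;> rfl

theorem castPart_mem {C : ∀ k l : ℕ, Set (CatPartition k l)} {k l k' l' : ℕ}
    (hk : k = k') (hl : l = l') (p : CatPartition k l) (hp : p ∈ C k l) :
    castPart hk hl p ∈ C k' l' := by
  subst hk; subst hl
  rwa [castPart_rfl_rfl]

end IdCast

/-! #### The composition relation -/

section Comp

variable {a b c : ℕ} (P : CatPartition a b) (Q : CatPartition b c)

/-- The setoid on all three rows from which the composition is obtained by restriction. -/
def cSup : Setoid (Fin a ⊕ (Fin b ⊕ Fin c)) :=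
  (Setoid.ker fun x : Fin a ⊕ (Fin b ⊕ Fin c) =>
      Sum.map (Quotient.mk P) (id : Fin c → Fin c)
        ((Equiv.sumAssoc (Fin a) (Fin b) (Fin c)).symm x))
    ⊔ Setoid.ker (Sum.map (id : Fin a → Fin a) (Quotient.mk Q))

theorem compPart_rel_iff (x y : Fin a ⊕ Fin c) :
    (compPart Q P).r x y ↔
      (cSup P Q).r (Sum.map id Sum.inr x) (Sum.map id Sum.inr y) := Iff.rfl

theorem cSup_of_P {w w' : Fin a ⊕ Fin b} (h : P.r w w') :
    (cSup P Q).r (Sum.map id Sum.inl w) (Sum.map id Sum.inl w') := by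
  have : (Setoid.ker fun x : Fin a ⊕ (Fin b ⊕ Fin c) =>
      Sum.map (Quotient.mk P) (id : Fin c → Fin c)
        ((Equiv.sumAssoc (Fin a) (Fin b) (Fin c)).symm x))
      (Sum.map id Sum.inl w) (Sum.map id Sum.inl w') := by
    rw [Setoid.ker_def]
    rcases w with i | u <;> rcases w' with j | v <;>
      · simp only [Sum.map_inl, Sum.map_inr, Equiv.sumAssoc, Equiv.coe_fn_symm_mk,
          Sum.elim_inl, Sum.elim_inr, id_eq]
        exact congrArg Sum.inl (Quotient.sound h)
  exact Setoid.le_def.mp le_sup_left this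

theorem cSup_of_Q {w w' : Fin b ⊕ Fin c} (h : Q.r w w') :
    (cSup P Q).r (Sum.inr w) (Sum.inr w') := by
  have : (Setoid.ker (Sum.map (id : Fin a → Fin a) (Quotient.mk Q)))
      (Sum.inr w) (Sum.inr w') := by
    rw [Setoid.ker_def]
    simp only [Sum.map_inr]
    exact congrArg Sum.inr (Quotient.sound h)
  exact Setoid.le_def.mp le_sup_right this

theorem compPart_le_ker {L : Type*} (ν : Fin a → L) (κ : Fin b → L) (μ : Fin c → L)
    (hP : ∀ x y, P.r x y → Sum.elim ν κ x = Sum.elim ν κ y)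
    (hQ : ∀ x y, Q.r x y → Sum.elim κ μ x = Sum.elim κ μ y) :
    ∀ x y, (compPart Q P).r x y → Sum.elim ν μ x = Sum.elim ν μ y := by
  have key : cSup P Q ≤ Setoid.ker (Sum.elim ν (Sum.elim κ μ)) := by
    apply sup_le
    · rw [Setoid.le_def]
      intro x y h
      rw [Setoid.ker_def] at h ⊢
      rcases x with i | (u | x') <;> rcases y with j | (v | y') <;>
          simp only [Equiv.sumAssoc, Equiv.coe_fn_symm_mk, Sum.elim_inl, Sum.elim_inr,
            Sum.map_inl, Sum.map_inr, id_eq] at h ⊢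
      · exact hP _ _ (Quotient.exact (Sum.inl_injective h))
      · exact hP _ _ (Quotient.exact (Sum.inl_injective h))
      · exact absurd h Sum.inl_ne_inr
      · exact hP _ _ (Quotient.exact (Sum.inl_injective h))
      · exact hP _ _ (Quotient.exact (Sum.inl_injective h))
      · exact absurd h Sum.inl_ne_inr
      · exact absurd h Sum.inr_ne_inl
      · exact absurd h Sum.inr_ne_inl
      · exact congrArg μ (Sum.inr_injective h)
    · rw [Setoid.le_def]
      intro x y h
      rw [Setoid.ker_def] at h ⊢
      rcases x with i | w <;> rcases y with j | w' <;>
          simp only [Sum.map_inl, Sum.map_inr, Sum.elim_inl, Sum.elim_inr, id_eq] at h ⊢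
      · exact congrArg ν (Sum.inl_injective h)
      · exact absurd h Sum.inl_ne_inr
      · exact absurd h Sum.inr_ne_inl
      · exact hQ _ _ (Quotient.exact (Sum.inr_injective h))
  intro x y h
  rw [compPart_rel_iff] at h
  have h2 := Setoid.le_def.mp key h
  rw [Setoid.ker_def] at h2
  rcases x with i | x' <;> rcases y with j | y' <;>
    simpa only [Sum.map_inl, Sum.map_inr, Sum.elim_inl, Sum.elim_inr, id_eq] using h2

end Comp

/-! #### idPow als tensor power, membership -/

section IdPow

theorem tensor_idPow (r : ℕ) : tensorPart (idPow r) (idPow 1) = idPow (r + 1) := by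
  apply Setoid.ext
  intro x y
  show (CatPartition.sumSetoid (idPow r) (idPow 1)).r _ _ ↔ _
  set F := (Sum.elim
      (fun a : Fin (r + 1) =>
        (Sum.map (Sum.inl : Fin r → Fin r ⊕ Fin r) (Sum.inl : Fin 1 → Fin 1 ⊕ Fin 1)
          (finSumFinEquiv.symm a)))
      (fun b : Fin (r + 1) =>
        (Sum.map (Sum.inr : Fin r → Fin r ⊕ Fin r) (Sum.inr : Fin 1 → Fin 1 ⊕ Fin 1)
          (finSumFinEquiv.symm b)))) with hF
  have key : ∀ z : Fin (r + 1) ⊕ Fin (r + 1),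
      Sum.map (Quotient.mk (idPow r)) (Quotient.mk (idPow 1)) (F z)
        = Sum.map (Quotient.mk (idPow r)) (Quotient.mk (idPow 1))
            (Sum.map Sum.inl Sum.inl (finSumFinEquiv.symm (Sum.elim id id z))) := by
    rintro (a | a)
    · simp [hF]
    · simp only [hF, Sum.elim_inr, id_eq]
      rcases h : finSumFinEquiv.symm a with i | i <;>
        · simp only [Sum.map_inl, Sum.map_inr]
          exact congrArg _ (Quotient.sound (by exact rfl))
  constructor
  · intro h
    have h' := h
    show Sum.elim (id : Fin (r+1) → _) id x = Sum.elim id id y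
    have e1 := key x
    have e2 := key y
    have h2 : Sum.map (Quotient.mk (idPow r)) (Quotient.mk (idPow 1))
        (Sum.map Sum.inl Sum.inl (finSumFinEquiv.symm (Sum.elim id id x)))
        = Sum.map (Quotient.mk (idPow r)) (Quotient.mk (idPow 1))
        (Sum.map Sum.inl Sum.inl (finSumFinEquiv.symm (Sum.elim id id y))) := by
      rw [← e1, ← e2]; exact h'
    set u := Sum.elim (id : Fin (r+1) → _) id x with hu
    set v := Sum.elim (id : Fin (r+1) → _) id y with hv
    rcases hx : finSumFinEquiv.symm u with i | i <;> rcases hy : finSumFinEquiv.symm v with j | j <;>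
        rw [hx, hy] at h2 <;>
        simp only [Sum.map_inl, Sum.map_inr] at h2
    · have := Quotient.exact (Sum.inl_injective h2)
      have hij : i = j := this
      have : u = v := by
        rw [← finSumFinEquiv.apply_symm_apply u, ← finSumFinEquiv.apply_symm_apply v, hx, hy, hij]
      exact this
    · exact absurd h2 Sum.inl_ne_inr
    · exact absurd h2 Sum.inr_ne_inl
    · have := Quotient.exact (Sum.inr_injective h2)
      have hij : i = j := Subsingleton.elim i j
      have : u = v := by
        rw [← finSumFinEquiv.apply_symm_apply u, ← finSumFinEquiv.apply_symm_apply v, hx, hy, hij]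
      exact this
  · intro h
    have h' : Sum.elim (id : Fin (r+1) → _) id x = Sum.elim id id y := h
    show Sum.map (Quotient.mk (idPow r)) (Quotient.mk (idPow 1)) (F x)
        = Sum.map (Quotient.mk (idPow r)) (Quotient.mk (idPow 1)) (F y)
    rw [key x, key y, h']

theorem idPow_mem {C : ∀ k l : ℕ, Set (CatPartition k l)} (hC : IsGenCategory C)
    (h0 : idPow 0 ∈ C 0 0) : ∀ r : ℕ, idPow r ∈ C r r := by
  intro r
  induction r with
  | zero => exact h0
  | succ n ih =>
      have := hC.tensor_mem _ _ ih hC.id_mem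
      rwa [tensor_idPow] at this

end IdPow

/-! #### invPart algebra -/

section InvAlgebra

theorem comap_equiv_sup {α β : Type*} (e : α ≃ β) (s t : Setoid β) :
    Setoid.comap e (s ⊔ t) = Setoid.comap e s ⊔ Setoid.comap e t := by
  apply le_antisymm
  · rw [Setoid.le_def]
    intro x y h
    have h2 : (Relation.EqvGen.setoid fun a b => s a b ∨ t a b) (e x) (e y) := by
      rw [← Setoid.sup_eq_eqvGen]; exact h
    have key : ∀ u v, Relation.EqvGen (fun a b => s a b ∨ t a b) u v →
        (Setoid.comap e s ⊔ Setoid.comap e t) (e.symm u) (e.symm v) := by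
      intro u v huv
      induction huv with
      | rel a b hab =>
          rcases hab with h' | h'
          · exact Setoid.le_def.mp le_sup_left
              (show s (e (e.symm a)) (e (e.symm b)) by simpa using h')
          · exact Setoid.le_def.mp le_sup_right
              (show t (e (e.symm a)) (e (e.symm b)) by simpa using h')
      | refl a => exact Setoid.refl' _ _
      | symm a b _ ih => exact Setoid.symm' _ ih
      | trans a b c _ _ ih1 ih2 => exact Setoid.trans' _ ih1 ih2
    have h3 := key _ _ h2
    simpa using h3
  · apply sup_le <;> rw [Setoid.le_def]
    · intro x y h
      exact Setoid.le_def.mp le_sup_left h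
    · intro x y h
      exact Setoid.le_def.mp le_sup_right h

theorem invPart_invPart {k l : ℕ} (p : CatPartition k l) : invPart (invPart p) = p := by
  apply Setoid.ext
  intro x y
  show p.r (Sum.swap (Sum.swap x)) (Sum.swap (Sum.swap y)) ↔ p.r x y
  rw [Sum.swap_swap, Sum.swap_swap]

theorem invPart_reflPart {k l : ℕ} (p : CatPartition k l) :
    invPart (reflPart p) = reflPart (invPart p) := by
  apply Setoid.ext
  intro x y
  rcases x with i | i <;> rcases y with j | j <;> exact Iff.rfl

theorem invPart_idPow (r : ℕ) : invPart (idPow r) = idPow r := by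
  apply Setoid.ext
  intro x y
  rcases x with i | i <;> rcases y with j | j <;>
    constructor <;> intro h <;>
    · show _ = _
      have h' : Sum.elim (id : Fin r → Fin r) id _ = Sum.elim (id : Fin r → Fin r) id _ := h
      simp only [Sum.swap_inl, Sum.swap_inr, Sum.elim_inl, Sum.elim_inr, id_eq] at h' ⊢
      exact h'

end InvAlgebra

section InvAlgebra2

theorem glue_surjective {k l k' l' : ℕ} :
    Function.Surjective (glue (k := k) (l := l) (k' := k') (l' := l')) := by
  rintro (a | a)
  · rcases h : finSumFinEquiv.symm a with i | i
    · refine ⟨Sum.inl (Sum.inl i), ?_⟩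
      show Sum.inl (Fin.castAdd k' i) = Sum.inl a
      rw [← finSumFinEquiv.apply_symm_apply a, h]
      rfl
    · refine ⟨Sum.inr (Sum.inl i), ?_⟩
      show Sum.inl (Fin.natAdd k i) = Sum.inl a
      rw [← finSumFinEquiv.apply_symm_apply a, h]
      rfl
  · rcases h : finSumFinEquiv.symm a with i | i
    · refine ⟨Sum.inl (Sum.inr i), ?_⟩
      show Sum.inr (Fin.castAdd l' i) = Sum.inr a
      rw [← finSumFinEquiv.apply_symm_apply a, h]
      rfl
    · refine ⟨Sum.inr (Sum.inr i), ?_⟩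
      show Sum.inr (Fin.natAdd l i) = Sum.inr a
      rw [← finSumFinEquiv.apply_symm_apply a, h]
      rfl

theorem invPart_tensorPart {k l k' l' : ℕ} (p : CatPartition k l) (q : CatPartition k' l') :
    invPart (tensorPart p q) = tensorPart (invPart p) (invPart q) := by
  apply Setoid.ext
  intro x y
  obtain ⟨w, rfl⟩ := glue_surjective (k := l) (l := k) (k' := l') (l' := k') x
  obtain ⟨w', rfl⟩ := glue_surjective (k := l) (l := k) (k' := l') (l' := k') y
  have hswap : ∀ z : (Fin l ⊕ Fin k) ⊕ (Fin l' ⊕ Fin k'),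
      Sum.swap (glue z) = glue (Sum.map Sum.swap Sum.swap z) := by
    rintro ((i | i) | (i | i)) <;> rfl
  have LHS : (invPart (tensorPart p q)).r (glue w) (glue w')
      ↔ (CatPartition.sumSetoid p q).r (Sum.map Sum.swap Sum.swap w)
          (Sum.map Sum.swap Sum.swap w') := by
    show (tensorPart p q).r (Sum.swap (glue w)) (Sum.swap (glue w')) ↔ _
    rw [hswap, hswap, tensor_rel_glue]
  rw [LHS, tensor_rel_glue]
  rcases w with w1 | w1 <;> rcases w' with w2 | w2 <;>
    simp only [Sum.map_inl, Sum.map_inr]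
  · rw [sumSetoid_inl_inl, sumSetoid_inl_inl]; exact Iff.rfl
  · constructor
    · intro h; exact absurd h (sumSetoid_inl_inr _ _ _ _)
    · intro h; exact absurd h (sumSetoid_inl_inr _ _ _ _)
  · constructor
    · intro h; exact absurd (Setoid.symm' _ h) (sumSetoid_inl_inr _ _ _ _)
    · intro h; exact absurd (Setoid.symm' _ h) (sumSetoid_inl_inr _ _ _ _)
  · rw [sumSetoid_inr_inr, sumSetoid_inr_inr]; exact Iff.rfl

/-- The reindexing bijection used to relate the three-row setoids of a composition and of the
composition of the involutions. -/
def sigmaE (a b c : ℕ) : Fin c ⊕ (Fin b ⊕ Fin a) ≃ Fin a ⊕ (Fin b ⊕ Fin c) where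
  toFun := Sum.elim (fun x => Sum.inr (Sum.inr x))
    (Sum.elim (fun u => Sum.inr (Sum.inl u)) (fun i => Sum.inl i))
  invFun := Sum.elim (fun i => Sum.inr (Sum.inr i))
    (Sum.elim (fun u => Sum.inr (Sum.inl u)) (fun x => Sum.inl x))
  left_inv := by rintro (x | (u | i)) <;> rfl
  right_inv := by rintro (i | (u | x)) <;> rfl

theorem quot_eq_of_quot_eq {α β : Type*} {s : Setoid α} {t : Setoid β} {a b : α} {c d : β}
    (h : Quotient.mk s a = Quotient.mk s b) (himp : s.r a b → t.r c d) :
    Quotient.mk t c = Quotient.mk t d :=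
  Quotient.sound (himp (Quotient.exact h))

theorem invPart_compPart {a b c : ℕ} (P : CatPartition a b) (Q : CatPartition b c) :
    invPart (compPart Q P) = compPart (invPart P) (invPart Q) := by
  have hker1 : Setoid.comap (sigmaE a b c)
      (Setoid.ker fun x : Fin a ⊕ (Fin b ⊕ Fin c) =>
        Sum.map (Quotient.mk P) (id : Fin c → Fin c)
          ((Equiv.sumAssoc (Fin a) (Fin b) (Fin c)).symm x))
      = Setoid.ker (Sum.map (id : Fin c → Fin c) (Quotient.mk (invPart P))) := by
    apply Setoid.ext
    intro z z'
    rw [Setoid.comap_rel, Setoid.ker_def, Setoid.ker_def]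
    rcases z with x | (u | i) <;> rcases z' with y | (v | j) <;>
      simp only [sigmaE, Equiv.coe_fn_mk, Sum.elim_inl, Sum.elim_inr, Equiv.sumAssoc,
        Equiv.coe_fn_symm_mk, Function.comp_apply, Function.comp, Sum.map_inl, Sum.map_inr,
        id_eq] <;>
      constructor <;> intro h <;>
      first
        | exact absurd h Sum.inl_ne_inr
        | exact absurd h Sum.inr_ne_inl
        | exact congrArg Sum.inl (Sum.inr_injective h)
        | exact congrArg Sum.inr (Sum.inl_injective h)
        | exact congrArg Sum.inl (quot_eq_of_quot_eq (Sum.inr_injective h) id)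
        | exact congrArg Sum.inr (quot_eq_of_quot_eq (Sum.inl_injective h) id)
        | exact congrArg Sum.inl (quot_eq_of_quot_eq (Sum.inl_injective h) id)
        | exact congrArg Sum.inr (quot_eq_of_quot_eq (Sum.inr_injective h) id)
  have hker2 : Setoid.comap (sigmaE a b c)
      (Setoid.ker (Sum.map (id : Fin a → Fin a) (Quotient.mk Q)))
      = Setoid.ker (fun x : Fin c ⊕ (Fin b ⊕ Fin a) =>
          Sum.map (Quotient.mk (invPart Q)) (id : Fin a → Fin a)
            ((Equiv.sumAssoc (Fin c) (Fin b) (Fin a)).symm x)) := by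
    apply Setoid.ext
    intro z z'
    rw [Setoid.comap_rel, Setoid.ker_def, Setoid.ker_def]
    rcases z with x | (u | i) <;> rcases z' with y | (v | j) <;>
      simp only [sigmaE, Equiv.coe_fn_mk, Sum.elim_inl, Sum.elim_inr, Equiv.sumAssoc,
        Equiv.coe_fn_symm_mk, Function.comp_apply, Function.comp, Sum.map_inl, Sum.map_inr,
        id_eq] <;>
      constructor <;> intro h <;>
      first
        | exact absurd h Sum.inl_ne_inr
        | exact absurd h Sum.inr_ne_inl
        | exact congrArg Sum.inl (Sum.inr_injective h)
        | exact congrArg Sum.inr (Sum.inl_injective h)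
        | exact congrArg Sum.inl (quot_eq_of_quot_eq (Sum.inr_injective h) id)
        | exact congrArg Sum.inr (quot_eq_of_quot_eq (Sum.inl_injective h) id)
        | exact congrArg Sum.inl (quot_eq_of_quot_eq (Sum.inl_injective h) id)
        | exact congrArg Sum.inr (quot_eq_of_quot_eq (Sum.inr_injective h) id)
  apply Setoid.ext
  intro x y
  show (compPart Q P).r (Sum.swap x) (Sum.swap y) ↔ (compPart (invPart P) (invPart Q)).r x y
  rw [compPart_rel_iff, compPart_rel_iff]
  show (cSup P Q).r (Sum.map id Sum.inr (Sum.swap x)) (Sum.map id Sum.inr (Sum.swap y))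
    ↔ (cSup (invPart Q) (invPart P)).r (Sum.map id Sum.inr x) (Sum.map id Sum.inr y)
  have hσ : ∀ z : Fin c ⊕ Fin a,
      Sum.map id Sum.inr (Sum.swap z) = sigmaE a b c (Sum.map id Sum.inr z) := by
    rintro (x | i) <;> rfl
  rw [hσ x, hσ y]
  have : cSup (invPart Q) (invPart P) = Setoid.comap (sigmaE a b c) (cSup P Q) := by
    show _ = Setoid.comap (sigmaE a b c) (_ ⊔ _)
    rw [comap_equiv_sup, hker1, hker2, cSup]
    rw [sup_comm]
  rw [this]
  exact Iff.rfl

end InvAlgebra2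

/-! #### Helpers for finSumFinEquiv -/

section FinHelpers

theorem val_of_symm_inl {n n' : ℕ} {u : Fin (n + n')} {a : Fin n}
    (h : finSumFinEquiv.symm u = Sum.inl a) : (u : ℕ) = a := by
  have h2 : u = finSumFinEquiv (Sum.inl a) := by
    rw [← h, Equiv.apply_symm_apply]
  rw [h2]
  simp

theorem val_of_symm_inr {n n' : ℕ} {u : Fin (n + n')} {a : Fin n'}
    (h : finSumFinEquiv.symm u = Sum.inr a) : (u : ℕ) = n + a := by
  have h2 : u = finSumFinEquiv (Sum.inr a) := by
    rw [← h, Equiv.apply_symm_apply]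
  rw [h2]
  simp

end FinHelpers

/-! #### The rotation step -/

section RotStep

variable {K m : ℕ}

/-- The insertion layer: `id_K ⊗ w ⊗ id_1`. -/
def Z1 (w : CatPartition 0 m) : CatPartition (K + 1) ((K + m) + 1) :=
  tensorPart (tensorPart (idPow K) w) (idPow 1)

/-- The label type. -/
abbrev Lab (w : CatPartition 0 m) (v : CatPartition (K + 1) 0) : Type :=
  Quotient w ⊕ Quotient (invPart v)

open Classical in
/-- Labels of the points of `w`: the block of the first point is relabelled by the last
point of the cup, every other block keeps its own label. -/
noncomputable def wlab (hm : 0 < m) (w : CatPartition 0 m) (v : CatPartition (K + 1) 0)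
    (z : Fin 0 ⊕ Fin m) : Lab w v :=
  if w.r (Sum.inr ⟨0, hm⟩) z then Sum.inr (Quotient.mk (invPart v) (Sum.inr (Fin.last K)))
  else Sum.inl (Quotient.mk w z)

theorem wlab_wd (hm : 0 < m) (w : CatPartition 0 m) (v : CatPartition (K + 1) 0)
    {z z' : Fin 0 ⊕ Fin m} (h : w.r z z') : wlab hm w v z = wlab hm w v z' := by
  unfold wlab
  by_cases h1 : w.r (Sum.inr ⟨0, hm⟩) z
  · rw [if_pos h1, if_pos (Setoid.trans' w h1 h)]
  · rw [if_neg h1, if_neg (fun h2 => h1 (Setoid.trans' w h2 (Setoid.symm' w h)))]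
    exact congrArg Sum.inl (Quotient.sound h)

/-- Labels of the cup points. -/
noncomputable def cuplab (w : CatPartition 0 m) (v : CatPartition (K + 1) 0) (i : Fin (K + 1)) :
    Lab w v :=
  Sum.inr (Quotient.mk (invPart v) (Sum.inr i))

open Classical in
/-- Labels of the points of the middle row `[g_1, …, g_K, w_1, …, w_m, g_{K+1}]`. -/
noncomputable def midlab (hm : 0 < m) (w : CatPartition 0 m) (v : CatPartition (K + 1) 0)
    (p : Fin ((K + m) + 1)) : Lab w v :=
  if h : (p : ℕ) < K then Sum.inr (Quotient.mk (invPart v) (Sum.inr ⟨(p : ℕ), by omega⟩))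
  else if h2 : (p : ℕ) < K + m then wlab hm w v (Sum.inr ⟨(p : ℕ) - K, by omega⟩)
  else Sum.inr (Quotient.mk (invPart v) (Sum.inr (Fin.last K)))

/-- Position of the `i`-th cup point in the middle row. -/
def gPos (i : Fin (K + 1)) : Fin ((K + m) + 1) :=
  if h : (i : ℕ) < K then ⟨(i : ℕ), by omega⟩ else ⟨K + m, by omega⟩

/-- Position of the `x`-th point of `w` in the middle row. -/
def wPos (x : Fin m) : Fin ((K + m) + 1) := ⟨K + (x : ℕ), by omega⟩

theorem Z1_rel_strand (w : CatPartition 0 m) (i : Fin (K + 1)) :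
    (Z1 (K := K) w).r (Sum.inl i) (Sum.inr (gPos i)) := by
  by_cases h : (i : ℕ) < K
  · have h1 : (Sum.inl i : Fin (K+1) ⊕ Fin ((K+m)+1))
        = glue (k := K + 0) (l := K + m) (k' := 1) (l' := 1)
            (Sum.inl (glue (k := K) (l := K) (k' := 0) (l' := m)
              (Sum.inl (Sum.inl ⟨(i : ℕ), h⟩)))) := by
      show _ = Sum.inl (Fin.castAdd 1 (Fin.castAdd 0 ⟨(i : ℕ), h⟩))
      exact congrArg Sum.inl (Fin.ext (by simp))
    have h2 : (Sum.inr (gPos i) : Fin (K+1) ⊕ Fin ((K+m)+1))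
        = glue (k := K + 0) (l := K + m) (k' := 1) (l' := 1)
            (Sum.inl (glue (k := K) (l := K) (k' := 0) (l' := m)
              (Sum.inl (Sum.inr ⟨(i : ℕ), h⟩)))) := by
      show _ = Sum.inr (Fin.castAdd 1 (Fin.castAdd m ⟨(i : ℕ), h⟩))
      exact congrArg Sum.inr (Fin.ext (by simp [gPos, h]))
    rw [h1, h2]
    show (tensorPart (tensorPart (idPow K) w) (idPow 1)).r _ _
    rw [tensor_rel_glue, sumSetoid_inl_inl, tensor_rel_glue, sumSetoid_inl_inl]
    exact rfl
  · have hiK : (i : ℕ) = K := by omega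
    have h1 : (Sum.inl i : Fin (K+1) ⊕ Fin ((K+m)+1))
        = glue (k := K + 0) (l := K + m) (k' := 1) (l' := 1)
            (Sum.inr (Sum.inl (0 : Fin 1))) := by
      show _ = Sum.inl (Fin.natAdd (K + 0) (0 : Fin 1))
      exact congrArg Sum.inl (Fin.ext (by simp [hiK]))
    have h2 : (Sum.inr (gPos i) : Fin (K+1) ⊕ Fin ((K+m)+1))
        = glue (k := K + 0) (l := K + m) (k' := 1) (l' := 1)
            (Sum.inr (Sum.inr (0 : Fin 1))) := by
      show _ = Sum.inr (Fin.natAdd (K + m) (0 : Fin 1))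
      exact congrArg Sum.inr (Fin.ext (by simp [gPos, h]))
    rw [h1, h2]
    show (tensorPart (tensorPart (idPow K) w) (idPow 1)).r _ _
    rw [tensor_rel_glue, sumSetoid_inr_inr]
    exact rfl

theorem Z1_rel_w (w : CatPartition 0 m) {x y : Fin m} (h : w.r (Sum.inr x) (Sum.inr y)) :
    (Z1 (K := K) w).r (Sum.inr (wPos (K := K) x)) (Sum.inr (wPos (K := K) y)) := by
  have h1 : ∀ z : Fin m, (Sum.inr (wPos (K := K) z) : Fin (K+1) ⊕ Fin ((K+m)+1))
      = glue (k := K + 0) (l := K + m) (k' := 1) (l' := 1)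
          (Sum.inl (glue (k := K) (l := K) (k' := 0) (l' := m)
            (Sum.inr (Sum.inr z)))) := by
    intro z
    show _ = Sum.inr (Fin.castAdd 1 (Fin.natAdd K z))
    exact congrArg Sum.inr (Fin.ext (by simp [wPos]))
  rw [h1 x, h1 y]
  show (tensorPart (tensorPart (idPow K) w) (idPow 1)).r _ _
  rw [tensor_rel_glue, sumSetoid_inl_inl, tensor_rel_glue, sumSetoid_inr_inr]
  exact h


theorem Z1_le (hm : 0 < m) (w : CatPartition 0 m) (v : CatPartition (K + 1) 0) :
    ∀ x y, (Z1 (K := K) w).r x y →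
      Sum.elim (cuplab w v) (midlab hm w v) x = Sum.elim (cuplab w v) (midlab hm w v) y := by
  have lab_eq : ∀ (i : Fin (K+1)) (p : Fin ((K+m)+1)), (i : ℕ) = (p : ℕ) → (p : ℕ) < K →
      cuplab w v i = midlab hm w v p := by
    intro i p hip hp
    unfold cuplab midlab
    rw [dif_pos hp]
    have : i = ⟨(p : ℕ), by omega⟩ := Fin.ext (by simp [hip])
    rw [this]
  have lab_eq2 : ∀ (i : Fin (K+1)) (p : Fin ((K+m)+1)), (i : ℕ) = K → (p : ℕ) = K + m →
      cuplab w v i = midlab hm w v p := by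
    intro i p hi hp
    unfold cuplab midlab
    rw [dif_neg (by omega), dif_neg (by omega)]
    have : i = Fin.last K := Fin.ext (by simpa using hi)
    rw [this]
  have midlab_w : ∀ (p : Fin ((K+m)+1)) (t : Fin m), (p : ℕ) = K + (t : ℕ) →
      midlab hm w v p = wlab hm w v (Sum.inr t) := by
    intro p t hp
    unfold midlab
    rw [dif_neg (by omega), dif_pos (by omega)]
    have : (⟨(p : ℕ) - K, by omega⟩ : Fin m) = t := Fin.ext (by simp [hp])
    rw [this]
  have keyUU : ∀ i j : Fin (K+1), (Z1 (K := K) w).r (Sum.inl i) (Sum.inl j) →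
      cuplab w v i = cuplab w v j := by
    intro i j h
    replace h : (CatPartition.sumSetoid (tensorPart (idPow K) w) (idPow 1)).r
        (Sum.map Sum.inl Sum.inl ((finSumFinEquiv (m := K) (n := 1)).symm i))
        (Sum.map Sum.inl Sum.inl ((finSumFinEquiv (m := K) (n := 1)).symm j)) := h
    rcases hi : (finSumFinEquiv (m := K) (n := 1)).symm i with a | a <;>
        rcases hj : (finSumFinEquiv (m := K) (n := 1)).symm j with b | b <;>
        rw [hi, hj] at h <;> simp only [Sum.map_inl, Sum.map_inr] at h
    · have hA := (sumSetoid_inl_inl _ _ _ _).mp h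
      replace hA : (CatPartition.sumSetoid (idPow K) w).r
          (Sum.map Sum.inl Sum.inl ((finSumFinEquiv (m := K) (n := 0)).symm a))
          (Sum.map Sum.inl Sum.inl ((finSumFinEquiv (m := K) (n := 0)).symm b)) := hA
      rcases ha : (finSumFinEquiv (m := K) (n := 0)).symm a with s | s <;>
          rcases hb : (finSumFinEquiv (m := K) (n := 0)).symm b with t | t <;>
          rw [ha, hb] at hA <;> simp only [Sum.map_inl, Sum.map_inr] at hA
      · have hst : s = t := (sumSetoid_inl_inl _ _ _ _).mp hA
        have e1 := val_of_symm_inl hi; have e2 := val_of_symm_inl hj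
        have e3 := val_of_symm_inl ha; have e4 := val_of_symm_inl hb
        have : i = j := Fin.ext (by rw [e1, e2, e3, e4, hst])
        rw [this]
      · exact Fin.elim0 t
      · exact Fin.elim0 s
      · exact Fin.elim0 s
    · exact absurd h (sumSetoid_inl_inr _ _ _ _)
    · exact absurd (Setoid.symm' _ h) (sumSetoid_inl_inr _ _ _ _)
    · have e1 := val_of_symm_inr hi; have e2 := val_of_symm_inr hj
      have : i = j := Fin.ext (by have := a.isLt; have := b.isLt; omega)
      rw [this]
  have keyUL : ∀ (i : Fin (K+1)) (p : Fin ((K+m)+1)),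
      (Z1 (K := K) w).r (Sum.inl i) (Sum.inr p) →
      cuplab w v i = midlab hm w v p := by
    intro i p h
    replace h : (CatPartition.sumSetoid (tensorPart (idPow K) w) (idPow 1)).r
        (Sum.map Sum.inl Sum.inl ((finSumFinEquiv (m := K) (n := 1)).symm i))
        (Sum.map Sum.inr Sum.inr ((finSumFinEquiv (m := K + m) (n := 1)).symm p)) := h
    rcases hi : (finSumFinEquiv (m := K) (n := 1)).symm i with a | a <;>
        rcases hp : (finSumFinEquiv (m := K + m) (n := 1)).symm p with b | b <;>
        rw [hi, hp] at h <;> simp only [Sum.map_inl, Sum.map_inr] at h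
    · have hA := (sumSetoid_inl_inl _ _ _ _).mp h
      replace hA : (CatPartition.sumSetoid (idPow K) w).r
          (Sum.map Sum.inl Sum.inl ((finSumFinEquiv (m := K) (n := 0)).symm a))
          (Sum.map Sum.inr Sum.inr ((finSumFinEquiv (m := K) (n := m)).symm b)) := hA
      rcases ha : (finSumFinEquiv (m := K) (n := 0)).symm a with s | s <;>
          rcases hb : (finSumFinEquiv (m := K) (n := m)).symm b with t | t <;>
          rw [ha, hb] at hA <;> simp only [Sum.map_inl, Sum.map_inr] at hA
      · have hst : s = t := (sumSetoid_inl_inl _ _ _ _).mp hA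
        have e1 := val_of_symm_inl hi; have e3 := val_of_symm_inl ha
        have e2 := val_of_symm_inl hp; have e4 := val_of_symm_inl hb
        exact lab_eq i p (by omega) (by omega)
      · exact absurd hA (sumSetoid_inl_inr _ _ _ _)
      · exact Fin.elim0 s
      · exact Fin.elim0 s
    · exact absurd h (sumSetoid_inl_inr _ _ _ _)
    · exact absurd (Setoid.symm' _ h) (sumSetoid_inl_inr _ _ _ _)
    · have e1 := val_of_symm_inr hi; have e2 := val_of_symm_inr hp
      exact lab_eq2 i p (by have := a.isLt; omega) (by have := b.isLt; omega)
  have keyLL : ∀ p p' : Fin ((K+m)+1),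
      (Z1 (K := K) w).r (Sum.inr p) (Sum.inr p') →
      midlab hm w v p = midlab hm w v p' := by
    intro p p' h
    replace h : (CatPartition.sumSetoid (tensorPart (idPow K) w) (idPow 1)).r
        (Sum.map Sum.inr Sum.inr ((finSumFinEquiv (m := K + m) (n := 1)).symm p))
        (Sum.map Sum.inr Sum.inr ((finSumFinEquiv (m := K + m) (n := 1)).symm p')) := h
    rcases hp : (finSumFinEquiv (m := K + m) (n := 1)).symm p with b | b <;>
        rcases hp' : (finSumFinEquiv (m := K + m) (n := 1)).symm p' with b' | b' <;>
        rw [hp, hp'] at h <;> simp only [Sum.map_inl, Sum.map_inr] at h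
    · have hA := (sumSetoid_inl_inl _ _ _ _).mp h
      replace hA : (CatPartition.sumSetoid (idPow K) w).r
          (Sum.map Sum.inr Sum.inr ((finSumFinEquiv (m := K) (n := m)).symm b))
          (Sum.map Sum.inr Sum.inr ((finSumFinEquiv (m := K) (n := m)).symm b')) := hA
      rcases hb : (finSumFinEquiv (m := K) (n := m)).symm b with t | t <;>
          rcases hb' : (finSumFinEquiv (m := K) (n := m)).symm b' with t' | t' <;>
          rw [hb, hb'] at hA <;> simp only [Sum.map_inl, Sum.map_inr] at hA
      · have hst : t = t' := (sumSetoid_inl_inl _ _ _ _).mp hA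
        have e1 := val_of_symm_inl hp; have e2 := val_of_symm_inl hp'
        have e3 := val_of_symm_inl hb; have e4 := val_of_symm_inl hb'
        have : p = p' := Fin.ext (by omega)
        rw [this]
      · exact absurd hA (sumSetoid_inl_inr _ _ _ _)
      · exact absurd (Setoid.symm' _ hA) (sumSetoid_inl_inr _ _ _ _)
      · have hw : w.r (Sum.inr t) (Sum.inr t') := (sumSetoid_inr_inr _ _ _ _).mp hA
        have e1 := val_of_symm_inl hp; have e2 := val_of_symm_inl hp'
        have e3 := val_of_symm_inr hb; have e4 := val_of_symm_inr hb'
        rw [midlab_w p t (by omega), midlab_w p' t' (by omega)]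
        exact wlab_wd hm w v hw
    · exact absurd h (sumSetoid_inl_inr _ _ _ _)
    · exact absurd (Setoid.symm' _ h) (sumSetoid_inl_inr _ _ _ _)
    · have e1 := val_of_symm_inr hp; have e2 := val_of_symm_inr hp'
      have : p = p' := Fin.ext (by have := b.isLt; have := b'.isLt; omega)
      rw [this]
  intro x y h
  rcases x with i | p <;> rcases y with j | p'
  · exact keyUU i j h
  · exact keyUL i p' h
  · exact (keyUL j p (Setoid.symm' _ h)).symm
  · exact keyLL p p' h


/-- The cyclic successor. -/
def cyc {m : ℕ} (i : Fin m) : Fin m :=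
  if h : (i : ℕ) + 1 < m then ⟨(i : ℕ) + 1, h⟩
  else ⟨0, Nat.lt_of_le_of_lt (Nat.zero_le _) i.isLt⟩

/-- The left rotation of a partition on one line. -/
def rotSetoid {m : ℕ} (w : CatPartition 0 m) : CatPartition 0 m :=
  Setoid.comap (Sum.map id cyc) w

theorem rotSetoid_rel {m : ℕ} (w : CatPartition 0 m) (i j : Fin m) :
    (rotSetoid w).r (Sum.inr i) (Sum.inr j) ↔ w.r (Sum.inr (cyc i)) (Sum.inr (cyc j)) :=
  Iff.rfl

theorem wlab_inj (hm : 0 < m) (w : CatPartition 0 m) (v : CatPartition (K + 1) 0)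
    {z z' : Fin 0 ⊕ Fin m} (h : wlab (K := K) hm w v z = wlab hm w v z') : w.r z z' := by
  unfold wlab at h
  by_cases h1 : w.r (Sum.inr ⟨0, hm⟩) z <;> by_cases h2 : w.r (Sum.inr ⟨0, hm⟩) z'
  · exact Setoid.trans' w (Setoid.symm' w h1) h2
  · rw [if_pos h1, if_neg h2] at h
    exact absurd h.symm Sum.inl_ne_inr
  · rw [if_neg h1, if_pos h2] at h
    exact absurd h Sum.inl_ne_inr
  · rw [if_neg h1, if_neg h2] at h
    exact Quotient.exact (Sum.inl_injective h)

/-- The middle row `T₁`. -/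
def T1 (w : CatPartition 0 m) (v : CatPartition (K + 1) 0) : CatPartition 0 ((K + m) + 1) :=
  compPart (Z1 w) (invPart v)

theorem T1_le (hm : 0 < m) (w : CatPartition 0 m) (v : CatPartition (K + 1) 0) :
    ∀ x y, (T1 (K := K) w v).r x y →
      Sum.elim Fin.elim0 (midlab hm w v) x = Sum.elim Fin.elim0 (midlab hm w v) y := by
  apply compPart_le_ker (invPart v) (Z1 w) Fin.elim0 (cuplab w v) (midlab hm w v)
  · intro x y h
    rcases x with i | i
    · exact Fin.elim0 i
    rcases y with j | j
    · exact Fin.elim0 j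
    exact congrArg Sum.inr (Quotient.sound h)
  · exact Z1_le hm w v

theorem T1_rel_cup (w : CatPartition 0 m) (v : CatPartition (K + 1) 0) {i j : Fin (K + 1)}
    (h : (invPart v).r (Sum.inr i) (Sum.inr j)) :
    (T1 (K := K) w v).r (Sum.inr (gPos i)) (Sum.inr (gPos j)) := by
  rw [T1, compPart_rel_iff]
  simp only [Sum.map_inr]
  have s1 := cSup_of_Q (invPart v) (Z1 (K := K) w) (Z1_rel_strand w i)
  have s2 := cSup_of_P (invPart v) (Z1 (K := K) w) h
  have s3 := cSup_of_Q (invPart v) (Z1 (K := K) w) (Z1_rel_strand w j)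
  simp only [Sum.map_inr, Sum.map_inl, id_eq] at s1 s2 s3
  exact Setoid.trans' _ (Setoid.trans' _ (Setoid.symm' _ s1) s2) s3

theorem T1_rel_w (w : CatPartition 0 m) (v : CatPartition (K + 1) 0) {x y : Fin m}
    (h : w.r (Sum.inr x) (Sum.inr y)) :
    (T1 (K := K) w v).r (Sum.inr (wPos x)) (Sum.inr (wPos y)) := by
  rw [T1, compPart_rel_iff]
  simp only [Sum.map_inr]
  exact cSup_of_Q (invPart v) (Z1 (K := K) w) (Z1_rel_w w h)

/-- The staple layer. -/
def Z2 (v : CatPartition (K + 1) 0) : CatPartition ((K + 1) + m) (0 + m) :=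
  tensorPart v (idPow m)

def Z2c (v : CatPartition (K + 1) 0) : CatPartition ((K + 1) + m) m :=
  castPart rfl (Nat.zero_add m) (Z2 v)

theorem Z2c_rel_strand (v : CatPartition (K + 1) 0) (x : Fin m) :
    (Z2c (K := K) v).r (Sum.inl ⟨K + 1 + (x : ℕ), by omega⟩) (Sum.inr x) := by
  rw [Z2c, castPart_rel_iff]
  simp only [Sum.map_inl, Sum.map_inr]
  have h1 : (Sum.inl (⟨K + 1 + (x : ℕ), by omega⟩ : Fin ((K+1)+m))
      : Fin ((K+1)+m) ⊕ Fin (0+m))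
      = glue (k := K + 1) (l := 0) (k' := m) (l' := m) (Sum.inr (Sum.inl x)) := by
    show _ = Sum.inl (Fin.natAdd (K+1) x)
    exact congrArg Sum.inl (Fin.ext (by simp))
  have h2 : (Sum.inr (Fin.cast (Nat.zero_add m).symm x) : Fin ((K+1)+m) ⊕ Fin (0+m))
      = glue (k := K + 1) (l := 0) (k' := m) (l' := m) (Sum.inr (Sum.inr x)) := by
    show _ = Sum.inr (Fin.natAdd 0 x)
    exact congrArg Sum.inr (Fin.ext (by simp))
  have h3 : (Fin.cast (rfl : (K+1)+m = (K+1)+m).symm (⟨K + 1 + (x : ℕ), by omega⟩ : Fin ((K+1)+m)))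
      = (⟨K + 1 + (x : ℕ), by omega⟩ : Fin ((K+1)+m)) := rfl
  show (Z2 (K := K) v).r (Sum.inl _) (Sum.inr _)
  rw [show (Sum.inl (Fin.cast (rfl : (K+1)+m = (K+1)+m).symm (⟨K + 1 + (x : ℕ), by omega⟩ : Fin ((K+1)+m))) : Fin ((K+1)+m) ⊕ Fin (0+m)) = glue (k := K + 1) (l := 0) (k' := m) (l' := m) (Sum.inr (Sum.inl x)) from h1, h2]
  rw [Z2, tensor_rel_glue, sumSetoid_inr_inr]
  exact rfl

theorem Z2c_rel_v (v : CatPartition (K + 1) 0) {a b : Fin (K + 1)}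
    (h : v.r (Sum.inl a) (Sum.inl b)) :
    (Z2c (K := K) (m := m) v).r (Sum.inl ⟨(a : ℕ), by omega⟩) (Sum.inl ⟨(b : ℕ), by omega⟩) := by
  rw [Z2c, castPart_rel_iff]
  simp only [Sum.map_inl]
  have h1 : ∀ c : Fin (K + 1),
      (Sum.inl (Fin.cast (rfl : (K+1)+m = (K+1)+m).symm (⟨(c : ℕ), by omega⟩ : Fin ((K+1)+m)))
        : Fin ((K+1)+m) ⊕ Fin (0+m))
      = glue (k := K + 1) (l := 0) (k' := m) (l' := m) (Sum.inl (Sum.inl c)) := by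
    intro c
    show _ = Sum.inl (Fin.castAdd m c)
    exact congrArg Sum.inl (Fin.ext (by simp))
  rw [h1 a, h1 b]
  rw [Z2, tensor_rel_glue, sumSetoid_inl_inl]
  exact h


noncomputable def midlabc (hm : 0 < m) (w : CatPartition 0 m) (v : CatPartition (K + 1) 0)
    (u : Fin ((K + 1) + m)) : Lab w v :=
  midlab hm w v ⟨(u : ℕ), by omega⟩

noncomputable def outlab (hm : 0 < m) (w : CatPartition 0 m) (v : CatPartition (K + 1) 0)
    (x : Fin m) : Lab w v :=
  wlab hm w v (Sum.inr (cyc x))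

theorem wlab_p0 (hm : 0 < m) (w : CatPartition 0 m) (v : CatPartition (K + 1) 0)
    {z : Fin m} (hz : (z : ℕ) = 0) :
    wlab hm w v (Sum.inr z) = Sum.inr (Quotient.mk (invPart v) (Sum.inr (Fin.last K))) := by
  unfold wlab
  rw [if_pos]
  have : z = ⟨0, hm⟩ := Fin.ext (by simpa using hz)
  rw [this]

theorem vlab_eq (hm : 0 < m) (w : CatPartition 0 m) (v : CatPartition (K + 1) 0)
    (u : Fin ((K + 1) + m)) (a : Fin (K + 1)) (hua : (u : ℕ) = (a : ℕ)) :
    midlabc hm w v u = Sum.inr (Quotient.mk (invPart v) (Sum.inr a)) := by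
  unfold midlabc midlab
  by_cases h : (a : ℕ) < K
  · rw [dif_pos (show (u : ℕ) < K by omega)]
    have : (⟨(u : ℕ), show (u : ℕ) < K + 1 by omega⟩ : Fin (K+1)) = a := Fin.ext (by simp [hua])
    exact congrArg (fun z => Sum.inr (Quotient.mk (invPart v) (Sum.inr z))) this
  · have haK : (a : ℕ) = K := by have := a.isLt; omega
    rw [dif_neg (show ¬ (u : ℕ) < K by omega),
        dif_pos (show (u : ℕ) < K + m by omega)]
    rw [wlab_p0 hm w v (show (u : ℕ) - K = 0 by omega)]
    have : a = Fin.last K := Fin.ext (by simpa using haK)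
    rw [this]

theorem strand_lab (hm : 0 < m) (w : CatPartition 0 m) (v : CatPartition (K + 1) 0)
    (u : Fin ((K + 1) + m)) (t : Fin m) (hut : (u : ℕ) = K + 1 + (t : ℕ)) :
    midlabc hm w v u = outlab hm w v t := by
  unfold midlabc midlab outlab
  by_cases h : (t : ℕ) + 1 < m
  · rw [dif_neg (by simp; omega), dif_pos (by simp; omega)]
    have hc : cyc t = ⟨(t : ℕ) + 1, h⟩ := by unfold cyc; rw [dif_pos h]
    rw [hc]
    exact congrArg (wlab hm w v) (congrArg Sum.inr (Fin.ext (by simp; omega)))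
  · have htm : (t : ℕ) + 1 = m := by have := t.isLt; omega
    rw [dif_neg (by simp; omega), dif_neg (by simp; omega)]
    have hc : cyc t = ⟨0, Nat.lt_of_le_of_lt (Nat.zero_le _) t.isLt⟩ := by
      unfold cyc; rw [dif_neg (by omega)]
    rw [hc, wlab_p0 hm w v (by simp)]

theorem Z2c_le (hm : 0 < m) (w : CatPartition 0 m) (v : CatPartition (K + 1) 0) :
    ∀ z z', (Z2c (K := K) (m := m) v).r z z' →
      Sum.elim (midlabc hm w v) (outlab hm w v) z
        = Sum.elim (midlabc hm w v) (outlab hm w v) z' := by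
  have keyUU : ∀ u u' : Fin ((K+1)+m), (Z2c (K := K) v).r (Sum.inl u) (Sum.inl u') →
      midlabc hm w v u = midlabc hm w v u' := by
    intro u u' h
    replace h : (CatPartition.sumSetoid v (idPow m)).r
        (Sum.map Sum.inl Sum.inl ((finSumFinEquiv (m := K + 1) (n := m)).symm u))
        (Sum.map Sum.inl Sum.inl ((finSumFinEquiv (m := K + 1) (n := m)).symm u')) := h
    rcases hu : (finSumFinEquiv (m := K + 1) (n := m)).symm u with a | a <;>
        rcases hu' : (finSumFinEquiv (m := K + 1) (n := m)).symm u' with b | b <;>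
        rw [hu, hu'] at h <;> simp only [Sum.map_inl, Sum.map_inr] at h
    · have hv := (sumSetoid_inl_inl _ _ _ _).mp h
      have e1 := val_of_symm_inl hu; have e2 := val_of_symm_inl hu'
      rw [vlab_eq hm w v u a e1, vlab_eq hm w v u' b e2]
      exact congrArg Sum.inr (Quotient.sound (show (invPart v).r (Sum.inr a) (Sum.inr b) from hv))
    · exact absurd h (sumSetoid_inl_inr _ _ _ _)
    · exact absurd (Setoid.symm' _ h) (sumSetoid_inl_inr _ _ _ _)
    · have hid := (sumSetoid_inr_inr _ _ _ _).mp h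
      have hab : a = b := hid
      have e1 := val_of_symm_inr hu; have e2 := val_of_symm_inr hu'
      have : u = u' := Fin.ext (by omega)
      rw [this]
  have keyUL : ∀ (u : Fin ((K+1)+m)) (x : Fin m),
      (Z2c (K := K) v).r (Sum.inl u) (Sum.inr x) →
      midlabc hm w v u = outlab hm w v x := by
    intro u x h
    replace h : (CatPartition.sumSetoid v (idPow m)).r
        (Sum.map Sum.inl Sum.inl ((finSumFinEquiv (m := K + 1) (n := m)).symm u))
        (Sum.map Sum.inr Sum.inr ((finSumFinEquiv (m := 0) (n := m)).symm
          (Fin.cast (Nat.zero_add m).symm x))) := h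
    rcases hu : (finSumFinEquiv (m := K + 1) (n := m)).symm u with a | a <;>
        rcases hx : (finSumFinEquiv (m := 0) (n := m)).symm (Fin.cast (Nat.zero_add m).symm x)
          with t | t <;>
        rw [hu, hx] at h <;> simp only [Sum.map_inl, Sum.map_inr] at h
    · exact Fin.elim0 t
    · exact absurd h (sumSetoid_inl_inr _ _ _ _)
    · exact Fin.elim0 t
    · have hid := (sumSetoid_inr_inr _ _ _ _).mp h
      have hat : a = t := hid
      have e1 := val_of_symm_inr hu
      have e2 := val_of_symm_inr hx
      have e2' : (x : ℕ) = (t : ℕ) := by simpa using e2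
      have := strand_lab hm w v u a (by omega)
      rw [this]
      unfold outlab
      exact congrArg (wlab hm w v) (congrArg Sum.inr (congrArg cyc (Fin.ext (by omega))))
  have keyLL : ∀ x x' : Fin m, (Z2c (K := K) v).r (Sum.inr x) (Sum.inr x') →
      outlab hm w v x = outlab hm w v x' := by
    intro x x' h
    replace h : (CatPartition.sumSetoid v (idPow m)).r
        (Sum.map Sum.inr Sum.inr ((finSumFinEquiv (m := 0) (n := m)).symm
          (Fin.cast (Nat.zero_add m).symm x)))
        (Sum.map Sum.inr Sum.inr ((finSumFinEquiv (m := 0) (n := m)).symm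
          (Fin.cast (Nat.zero_add m).symm x'))) := h
    rcases hx : (finSumFinEquiv (m := 0) (n := m)).symm (Fin.cast (Nat.zero_add m).symm x)
        with t | t <;>
      rcases hx' : (finSumFinEquiv (m := 0) (n := m)).symm (Fin.cast (Nat.zero_add m).symm x')
        with t' | t' <;>
      rw [hx, hx'] at h <;> simp only [Sum.map_inl, Sum.map_inr] at h
    · exact Fin.elim0 t
    · exact Fin.elim0 t
    · exact Fin.elim0 t'
    · have hid := (sumSetoid_inr_inr _ _ _ _).mp h
      have htt : t = t' := hid
      have e1 := val_of_symm_inr hx; have e2 := val_of_symm_inr hx'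
      have : x = x' := Fin.ext (by simp at e1 e2; omega)
      rw [this]
  intro z z' h
  rcases z with u | x <;> rcases z' with u' | x'
  · exact keyUU u u' h
  · exact keyUL u x' h
  · exact (keyUL u' x (Setoid.symm' _ h)).symm
  · exact keyLL x x' h


def T1c (w : CatPartition 0 m) (v : CatPartition (K + 1) 0) : CatPartition 0 ((K + 1) + m) :=
  castPart rfl (by omega) (T1 (K := K) w v)

theorem T1c_le (hm : 0 < m) (w : CatPartition 0 m) (v : CatPartition (K + 1) 0) :
    ∀ x y, (T1c (K := K) w v).r x y →
      Sum.elim Fin.elim0 (midlabc hm w v) x = Sum.elim Fin.elim0 (midlabc hm w v) y := by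
  intro x y h
  rw [T1c, castPart_rel_iff] at h
  have h2 := T1_le hm w v _ _ h
  rcases x with i | u
  · exact Fin.elim0 i
  rcases y with j | u'
  · exact Fin.elim0 j
  simp only [Sum.map_inr, Sum.elim_inr] at h2 ⊢
  show midlabc hm w v u = midlabc hm w v u'
  unfold midlabc
  have e : ∀ z : Fin ((K+1)+m),
      (⟨(z : ℕ), by omega⟩ : Fin ((K+m)+1)) = Fin.cast (by omega : (K+m)+1 = (K+1)+m).symm z :=
    fun z => Fin.ext (by simp)
  rw [e u, e u']
  exact h2

theorem T1c_rel (w : CatPartition 0 m) (v : CatPartition (K + 1) 0)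
    {p p' : Fin ((K + m) + 1)} {u u' : Fin ((K + 1) + m)}
    (hu : (u : ℕ) = (p : ℕ)) (hu' : (u' : ℕ) = (p' : ℕ))
    (h : (T1 (K := K) w v).r (Sum.inr p) (Sum.inr p')) :
    (T1c (K := K) w v).r (Sum.inr u) (Sum.inr u') := by
  rw [T1c, castPart_rel_iff]
  simp only [Sum.map_inr]
  have e1 : Fin.cast (by omega : (K+m)+1 = (K+1)+m).symm u = p := Fin.ext (by simp [hu])
  have e2 : Fin.cast (by omega : (K+m)+1 = (K+1)+m).symm u' = p' := Fin.ext (by simp [hu'])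
  rw [e1, e2]
  exact h

def T2 (w : CatPartition 0 m) (v : CatPartition (K + 1) 0) : CatPartition 0 m :=
  compPart (Z2c v) (T1c (K := K) w v)

theorem T2_le (hm : 0 < m) (w : CatPartition 0 m) (v : CatPartition (K + 1) 0) :
    ∀ x y, (T2 (K := K) w v).r x y →
      Sum.elim Fin.elim0 (outlab hm w v) x = Sum.elim Fin.elim0 (outlab hm w v) y := by
  apply compPart_le_ker (T1c (K := K) w v) (Z2c v) Fin.elim0 (midlabc hm w v) (outlab hm w v)
  · exact T1c_le hm w v
  · exact Z2c_le hm w v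

theorem T2_eq_rot (hm : 0 < m) (w : CatPartition 0 m) (v : CatPartition (K + 1) 0)
    (hrel : (∃ x : Fin m, (x : ℕ) ≠ 0 ∧ w.r (Sum.inr ⟨0, hm⟩) (Sum.inr x)) →
      ∃ α : Fin (K + 1), (α : ℕ) ≠ K ∧ v.r (Sum.inl α) (Sum.inl (Fin.last K))) :
    T2 (K := K) w v = rotSetoid w := by
  have lemA : ∀ x y : Fin m, (x : ℕ) + 1 < m → (y : ℕ) + 1 < m →
      w.r (Sum.inr (cyc x)) (Sum.inr (cyc y)) →
      (T2 (K := K) w v).r (Sum.inr x) (Sum.inr y) := by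
    intro x y hx hy hr
    rw [T2, compPart_rel_iff]
    simp only [Sum.map_inr]
    have s1 := cSup_of_Q (T1c (K := K) w v) (Z2c v) (Z2c_rel_strand v x)
    have s3 := cSup_of_Q (T1c (K := K) w v) (Z2c v) (Z2c_rel_strand v y)
    have hT : (T1c (K := K) w v).r (Sum.inr ⟨K + 1 + (x : ℕ), by omega⟩)
        (Sum.inr ⟨K + 1 + (y : ℕ), by omega⟩) := by
      refine T1c_rel w v (p := wPos (cyc x)) (p' := wPos (cyc y)) ?_ ?_ (T1_rel_w w v hr)
      · show K + 1 + (x : ℕ) = K + ((cyc x : ℕ))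
        unfold cyc
        rw [dif_pos hx]
        show K + 1 + (x : ℕ) = K + ((x : ℕ) + 1); omega
      · show K + 1 + (y : ℕ) = K + ((cyc y : ℕ))
        unfold cyc
        rw [dif_pos hy]
        show K + 1 + (y : ℕ) = K + ((y : ℕ) + 1); omega
    have s2 := cSup_of_P (T1c (K := K) w v) (Z2c v) hT
    simp only [Sum.map_inr, Sum.map_inl, id_eq] at s1 s2 s3
    exact Setoid.trans' _ (Setoid.trans' _ (Setoid.symm' _ s1) s2) s3
  have lemB : ∀ (x : Fin m) (hx : (x : ℕ) + 1 < m),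
      w.r (Sum.inr ⟨0, hm⟩) (Sum.inr ⟨(x : ℕ) + 1, hx⟩) →
      (T2 (K := K) w v).r (Sum.inr x) (Sum.inr ⟨m - 1, by omega⟩) := by
    intro x hx hr
    obtain ⟨α, hαK, hαv⟩ := hrel ⟨⟨(x : ℕ) + 1, hx⟩, by simp, hr⟩
    have hαlt : (α : ℕ) < K := by have := α.isLt; omega
    rw [T2, compPart_rel_iff]
    simp only [Sum.map_inr]
    -- strand at x
    have s1 := cSup_of_Q (T1c (K := K) w v) (Z2c v) (Z2c_rel_strand v x)
    -- w-relation between w-point 0 and w-point x+1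
    have hT1 : (T1c (K := K) w v).r (Sum.inr ⟨K, by omega⟩)
        (Sum.inr ⟨K + 1 + (x : ℕ), by omega⟩) := by
      refine T1c_rel w v (p := wPos ⟨0, hm⟩) (p' := wPos ⟨(x : ℕ) + 1, hx⟩) ?_ ?_
        (T1_rel_w w v hr)
      · show K = K + ((⟨0, hm⟩ : Fin m) : ℕ); simp
      · show K + 1 + (x : ℕ) = K + ((⟨(x : ℕ) + 1, hx⟩ : Fin m) : ℕ); simp; omega
    have s2 := cSup_of_P (T1c (K := K) w v) (Z2c v) hT1
    -- the staple relating the slot over w-point 0 with the slot over the cup point α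
    have s3 := cSup_of_Q (T1c (K := K) w v) (Z2c v) (Z2c_rel_v (m := m) v hαv)
    -- the cup relating α with the last cup point
    have hT2 : (T1c (K := K) w v).r (Sum.inr ⟨(α : ℕ), by omega⟩)
        (Sum.inr ⟨K + 1 + (m - 1), by omega⟩) := by
      refine T1c_rel w v (p := gPos α) (p' := gPos (Fin.last K)) ?_ ?_
        (T1_rel_cup w v (show v.r (Sum.inl α) (Sum.inl (Fin.last K)) from hαv))
      · show (α : ℕ) = ((gPos (K := K) (m := m) α : ℕ))
        unfold gPos; rw [dif_pos hαlt]
      · show K + 1 + (m - 1) = ((gPos (K := K) (m := m) (Fin.last K) : ℕ))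
        unfold gPos; rw [dif_neg (by simp)]
        show K + 1 + (m - 1) = K + m; omega
    have s4 := cSup_of_P (T1c (K := K) w v) (Z2c v) hT2
    -- strand at m-1
    have s5' := cSup_of_Q (T1c (K := K) w v) (Z2c v) (Z2c_rel_strand v ⟨m - 1, by omega⟩)
    have s5 : (cSup (T1c (K := K) w v) (Z2c v)).r
        (Sum.inr (Sum.inl ⟨K + 1 + (m - 1), by omega⟩))
        (Sum.inr (Sum.inr ⟨m - 1, by omega⟩)) := by
      have e : (⟨K + 1 + ((⟨m - 1, by omega⟩ : Fin m) : ℕ), by omega⟩ : Fin ((K+1)+m))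
          = ⟨K + 1 + (m - 1), by omega⟩ := Fin.ext (by simp)
      simpa [e] using s5'
    simp only [Sum.map_inr, Sum.map_inl, id_eq] at s1 s2 s3 s4 s5
    -- chain: x ← strand ← slot(x+1) ← w ← slot(0) ← staple(α side) ← α-cup ← last cup → strand → m-1
    refine Setoid.trans' _ (Setoid.symm' _ s1) ?_
    refine Setoid.trans' _ (Setoid.symm' _ s2) ?_
    refine Setoid.trans' _ (Setoid.symm' _ s3) ?_
    exact Setoid.trans' _ s4 s5
  apply Setoid.ext
  intro x y
  rcases x with i | i
  · exact Fin.elim0 i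
  rcases y with j | j
  · exact Fin.elim0 j
  rw [rotSetoid_rel]
  constructor
  · intro h
    have h2 := T2_le hm w v _ _ h
    simp only [Sum.elim_inr] at h2
    exact wlab_inj hm w v h2
  · intro h
    by_cases hi : (i : ℕ) + 1 < m <;> by_cases hj : (j : ℕ) + 1 < m
    · exact lemA i j hi hj h
    · -- j wraps
      by_cases hij : i = j
      · rw [hij]
      · have hjm : (j : ℕ) = m - 1 := by have := j.isLt; omega
        have hcj : cyc j = ⟨0, hm⟩ := by
          unfold cyc; rw [dif_neg hj]
        have hci : cyc i = ⟨(i : ℕ) + 1, hi⟩ := by unfold cyc; rw [dif_pos hi]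
        rw [hci, hcj] at h
        have := lemB i hi (Setoid.symm' w h)
        have ej : (⟨m - 1, by omega⟩ : Fin m) = j := Fin.ext (by simp [hjm])
        rwa [ej] at this
    · -- i wraps
      by_cases hij : i = j
      · rw [hij]
      · have him : (i : ℕ) = m - 1 := by have := i.isLt; omega
        have hci : cyc i = ⟨0, hm⟩ := by unfold cyc; rw [dif_neg hi]
        have hcj : cyc j = ⟨(j : ℕ) + 1, hj⟩ := by unfold cyc; rw [dif_pos hj]
        rw [hci, hcj] at h
        have := lemB j hj h
        have ei : (⟨m - 1, by omega⟩ : Fin m) = i := Fin.ext (by simp [him])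
        rw [ei] at this
        exact Setoid.symm' _ this
    · have : i = j := Fin.ext (by have := i.isLt; have := j.isLt; omega)
      rw [this]


theorem invPart_castPart {k l k' l' : ℕ} (hk : k = k') (hl : l = l') (p : CatPartition k l) :
    invPart (castPart hk hl p) = castPart hl hk (invPart p) := by
  apply Setoid.ext
  intro x y
  rcases x with i | i <;> rcases y with j | j <;> exact Iff.rfl

theorem rotStep {C : ∀ k l : ℕ, Set (CatPartition k l)} (hC : IsGenCategory C)
    {K m : ℕ} (hm : 0 < m) (h0 : idPow 0 ∈ C 0 0)
    (w : CatPartition 0 m) (hw : w ∈ C 0 m)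
    (v : CatPartition (K + 1) 0) (hv : v ∈ C (K + 1) 0) (hv' : invPart v ∈ C 0 (K + 1))
    (hrel : (∃ x : Fin m, (x : ℕ) ≠ 0 ∧ w.r (Sum.inr ⟨0, hm⟩) (Sum.inr x)) →
      ∃ α : Fin (K + 1), (α : ℕ) ≠ K ∧ v.r (Sum.inl α) (Sum.inl (Fin.last K))) :
    rotSetoid w ∈ C 0 m ∧ (invPart w ∈ C m 0 → invPart (rotSetoid w) ∈ C m 0) := by
  have hid := idPow_mem hC h0
  have hZ1 : Z1 (K := K) w ∈ C (K + 1) ((K + m) + 1) :=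
    hC.tensor_mem _ _ (hC.tensor_mem _ _ (hid K) hw) hC.id_mem
  have hT1 : T1 (K := K) w v ∈ C 0 ((K + m) + 1) := hC.comp_mem _ _ hv' hZ1
  have hT1c : T1c (K := K) w v ∈ C 0 ((K + 1) + m) := castPart_mem _ _ _ hT1
  have hZ2c : Z2c (K := K) (m := m) v ∈ C ((K + 1) + m) m :=
    castPart_mem _ _ _ (hC.tensor_mem _ _ hv (hid m))
  have hT2 : T2 (K := K) w v ∈ C 0 m := hC.comp_mem _ _ hT1c hZ2c
  rw [T2_eq_rot hm w v hrel] at hT2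
  refine ⟨hT2, fun hw' => ?_⟩
  rw [← T2_eq_rot hm w v hrel]
  rw [T2, invPart_compPart]
  have hiZ2c : invPart (Z2c (K := K) (m := m) v) ∈ C m ((K + 1) + m) := by
    rw [Z2c, invPart_castPart, Z2, invPart_tensorPart, invPart_idPow]
    exact castPart_mem _ _ _ (hC.tensor_mem _ _ hv' (hid m))
  have hiT1c : invPart (T1c (K := K) w v) ∈ C ((K + 1) + m) 0 := by
    rw [T1c, invPart_castPart, T1, invPart_compPart, invPart_invPart]
    refine castPart_mem _ _ _ (hC.comp_mem _ _ ?_ hv)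
    rw [Z1, invPart_tensorPart, invPart_tensorPart, invPart_idPow, invPart_idPow]
    exact hC.tensor_mem _ _ (hC.tensor_mem _ _ (hid K) hw') hC.id_mem
  exact hC.comp_mem _ _ hiZ2c hiT1c

theorem stopBranch {C : ∀ k l : ℕ, Set (CatPartition k l)} (hC : IsGenCategory C) {K : ℕ}
    (w : CatPartition 0 (K + 1)) (hw : w ∈ C 0 (K + 1)) (hw' : invPart w ∈ C (K + 1) 0)
    {j : Fin (K + 1)} (hj0 : (j : ℕ) ≠ 0)
    (hr : w.r (Sum.inr ⟨0, K.succ_pos⟩) (Sum.inr j)) :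
    ∃ v : CatPartition (K + 1) 0, v ∈ C (K + 1) 0 ∧ invPart v ∈ C 0 (K + 1) ∧
      ∃ α : Fin (K + 1), (α : ℕ) ≠ K ∧ v.r (Sum.inl α) (Sum.inl (Fin.last K)) := by
  refine ⟨reflPart (invPart w), hC.refl_mem _ hw', ?_, Fin.rev j, ?_, ?_⟩
  · rw [invPart_reflPart, invPart_invPart]
    exact hC.refl_mem _ hw
  · have := j.isLt
    rw [Fin.val_rev]
    omega
  · show (invPart w).r (Sum.inl (Fin.rev (Fin.rev j))) (Sum.inl (Fin.rev (Fin.last K)))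
    rw [Fin.rev_rev, Fin.rev_last]
    show w.r (Sum.inr j) (Sum.inr 0)
    have e : (0 : Fin (K + 1)) = ⟨0, K.succ_pos⟩ := rfl
    rw [e]
    exact Setoid.symm' w hr

theorem boot {C : ∀ k l : ℕ, Set (CatPartition k l)} (hC : IsGenCategory C) {K : ℕ}
    (q : CatPartition (K + 1) 0) (hq : q ∈ C (K + 1) 0) (hq' : invPart q ∈ C 0 (K + 1))
    (h0 : idPow 0 ∈ C 0 0) :
    ∀ c : ℕ, ∀ w : CatPartition 0 (K + 1), w ∈ C 0 (K + 1) → invPart w ∈ C (K + 1) 0 →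
    (∃ i j : Fin (K + 1), (i : ℕ) = c ∧ i ≠ j ∧ w.r (Sum.inr i) (Sum.inr j)) →
    ∃ v : CatPartition (K + 1) 0, v ∈ C (K + 1) 0 ∧ invPart v ∈ C 0 (K + 1) ∧
      ∃ α : Fin (K + 1), (α : ℕ) ≠ K ∧ v.r (Sum.inl α) (Sum.inl (Fin.last K)) := by
  intro c
  induction c with
  | zero =>
      rintro w hw hw' ⟨i, j, hi0, hij, hr⟩
      have hj0 : (j : ℕ) ≠ 0 := by
        intro h
        exact hij (Fin.ext (by omega))
      have hi : i = ⟨0, K.succ_pos⟩ := Fin.ext hi0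
      rw [hi] at hr
      exact stopBranch hC w hw hw' hj0 hr
  | succ c ih =>
      rintro w hw hw' ⟨i, j, hic, hij, hr⟩
      by_cases h1 : ∃ x : Fin (K + 1), (x : ℕ) ≠ 0 ∧ w.r (Sum.inr ⟨0, K.succ_pos⟩) (Sum.inr x)
      · obtain ⟨x, hx0, hxr⟩ := h1
        exact stopBranch hC w hw hw' hx0 hxr
      · have hj0 : (j : ℕ) ≠ 0 := by
          intro h
          have hje : j = ⟨0, K.succ_pos⟩ := Fin.ext h
          rw [hje] at hr
          exact h1 ⟨i, by omega, Setoid.symm' w hr⟩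
        obtain ⟨hw2, hw2'⟩ := rotStep hC K.succ_pos h0 w hw q hq hq' (fun h => absurd h h1)
        have hw2'' := hw2' hw'
        refine ih (rotSetoid w) hw2 hw2''
          ⟨⟨c, by omega⟩, ⟨(j : ℕ) - 1, by omega⟩, rfl, ?_, ?_⟩
        · intro h
          have : c = (j : ℕ) - 1 := by
            have := congrArg Fin.val h
            simpa using this
          exact hij (Fin.ext (by omega))
        · rw [rotSetoid_rel]
          have e1 : cyc (⟨c, by omega⟩ : Fin (K + 1)) = i := by
            unfold cyc
            rw [dif_pos (show c + 1 < K + 1 by have := i.isLt; omega)]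
            exact Fin.ext (by simp [hic])
          have e2 : cyc (⟨(j : ℕ) - 1, by omega⟩ : Fin (K + 1)) = j := by
            unfold cyc
            rw [dif_pos (show (j : ℕ) - 1 + 1 < K + 1 by have := j.isLt; omega)]
            exact Fin.ext (by simp; omega)
          rw [e1, e2]
          exact hr

theorem isLineRotated_unique {l : ℕ} (p p' : CatPartition 0 l) (h : IsLineRotated p p') :
    p' = rotSetoid p := by
  obtain ⟨h1, h2⟩ := h
  apply Setoid.ext
  intro x y
  rcases x with i | i
  · exact Fin.elim0 i
  rcases y with j | j
  · exact Fin.elim0 j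
  have main : ∀ i j : Fin l, (i : ℕ) < (j : ℕ) →
      (p'.r (Sum.inr i) (Sum.inr j) ↔ p.r (Sum.inr (cyc i)) (Sum.inr (cyc j))) := by
    intro i j hij
    have hi : (i : ℕ) + 1 < l := by have := j.isLt; omega
    have hci : cyc i = ⟨(i : ℕ) + 1, hi⟩ := by unfold cyc; rw [dif_pos hi]
    by_cases hj : (j : ℕ) + 1 < l
    · have hcj : cyc j = ⟨(j : ℕ) + 1, hj⟩ := by unfold cyc; rw [dif_pos hj]
      rw [hci, hcj]
      have key := h1 ⟨(i : ℕ) + 1, hi⟩ ⟨(j : ℕ) + 1, hj⟩ (by simp) (by simp; omega)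
      have e1 : (⟨((⟨(i : ℕ) + 1, hi⟩ : Fin l) : ℕ) - 1,
          lt_of_le_of_lt (Nat.sub_le _ _) (⟨(i : ℕ) + 1, hi⟩ : Fin l).isLt⟩ : Fin l) = i :=
        Fin.ext (by simp)
      have e2 : (⟨((⟨(j : ℕ) + 1, hj⟩ : Fin l) : ℕ) - 1,
          lt_of_le_of_lt (Nat.sub_le _ _) (⟨(j : ℕ) + 1, hj⟩ : Fin l).isLt⟩ : Fin l) = j :=
        Fin.ext (by simp)
      rw [e1, e2] at key
      exact key.symm
    · have hjl : (j : ℕ) = l - 1 := by have := j.isLt; omega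
      have hcj : cyc j = ⟨0, Nat.lt_of_le_of_lt (Nat.zero_le _) j.isLt⟩ := by
        unfold cyc; rw [dif_neg hj]
      rw [hci, hcj]
      have key := h2 ⟨(i : ℕ) + 1, hi⟩ (by simp)
      have e1 : (⟨((⟨(i : ℕ) + 1, hi⟩ : Fin l) : ℕ) - 1,
          lt_of_le_of_lt (Nat.sub_le _ _) (⟨(i : ℕ) + 1, hi⟩ : Fin l).isLt⟩ : Fin l) = i :=
        Fin.ext (by simp)
      have e2 : (⟨l - 1, Nat.sub_lt (Nat.lt_of_le_of_lt (Nat.zero_le _)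
          (⟨(i : ℕ) + 1, hi⟩ : Fin l).isLt) Nat.one_pos⟩ : Fin l) = j :=
        Fin.ext (by simp [hjl])
      rw [e1, e2] at key
      constructor
      · intro h'
        exact Setoid.symm' p (key.mpr h')
      · intro h'
        exact key.mp (Setoid.symm' p h')
  show p'.r _ _ ↔ (rotSetoid p).r _ _
  rw [rotSetoid_rel]
  rcases Nat.lt_trichotomy (i : ℕ) (j : ℕ) with hlt | heq | hgt
  · exact main i j hlt
  · have : i = j := Fin.ext heq
    rw [this]
    exact iff_of_true (Setoid.refl' p' _) (Setoid.refl' p _)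
  · have key := main j i hgt
    constructor
    · intro h'
      exact Setoid.symm' p (key.mp (Setoid.symm' p' h'))
    · intro h'
      exact Setoid.symm' p' (key.mpr (Setoid.symm' p h'))

end RotStep









end LineRot

/-- **Line rotation.** Let `C` be a generalized category of partitions containing
`p ∈ P(0,l)` as well as `q ∈ P(k,0)` and `q*`, where `q*` is not a tensor power of
lower singletons (i.e. `q` has a block of size at least two). Then every line rotated
version of `p` belongs to `C`. -/
theorem lineRotated_mem {k l : ℕ} (C : ∀ k l : ℕ, Set (CatPartition k l))
    (hC : IsGenCategory C)
    (p : CatPartition 0 l) (hp : p ∈ C 0 l)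
    (q : CatPartition k 0) (hq : q ∈ C k 0) (hq' : CatPartition.invPart q ∈ C 0 k)
    (hq_ns : ∃ x y : Fin k ⊕ Fin 0, x ≠ y ∧ q.r x y)
    (p' : CatPartition 0 l) (hrot : CatPartition.IsLineRotated p p') :
    p' ∈ C 0 l := by
  obtain ⟨x, y, hxy, hq_r⟩ := hq_ns
  rcases x with a | a
  swap
  · exact Fin.elim0 a
  rcases y with b | b
  swap
  · exact Fin.elim0 b
  have hab : a ≠ b := fun h => hxy (congrArg Sum.inl h)
  have hk : k ≠ 0 := fun h => Fin.elim0 (h ▸ a)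
  obtain ⟨K, rfl⟩ : ∃ K, k = K + 1 := ⟨k - 1, by omega⟩
  have h0 : CatPartition.idPow 0 ∈ C 0 0 := by
    have := hC.comp_mem _ _ hq' hq
    rwa [LineRot.partition_zero_zero_eq (CatPartition.compPart q (CatPartition.invPart q))
      (CatPartition.idPow 0)] at this
  rcases Nat.eq_zero_or_pos l with hl | hl
  · subst hl
    rw [LineRot.partition_zero_zero_eq p' p]
    exact hp
  · have hwitness : ∃ i j : Fin (K + 1), (i : ℕ) = (a : ℕ) ∧ i ≠ j ∧
        (CatPartition.invPart q).r (Sum.inr i) (Sum.inr j) :=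
      ⟨a, b, rfl, hab, show q.r (Sum.inl a) (Sum.inl b) from hq_r⟩
    have hq'' : CatPartition.invPart (CatPartition.invPart q) ∈ C (K + 1) 0 := by
      rw [LineRot.invPart_invPart]
      exact hq
    obtain ⟨v, hv, hv', α, hαK, hαv⟩ :=
      LineRot.boot hC q hq hq' h0 (a : ℕ) (CatPartition.invPart q) hq' hq'' hwitness
    have hrot2 := LineRot.rotStep hC hl h0 p hp v hv hv' (fun _ => ⟨α, hαK, hαv⟩)
    rw [LineRot.isLineRotated_unique p p' hrot]
    exact hrot2.1
end

section
/- Let q ∈ P(s,s) be a partition such that q = q* and q = qq (composition of q with itself). If the i-th upper point and the j-th lower point of q belong to the same block V, then the i-th lower point and the j-th upper point of q also belong to V. -/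
open scoped BigOperators

namespace Partition

/-- The disjoint sum of two setoids. -/
protected def sumSetoid {α β : Type*} (s : Setoid α) (t : Setoid β) : Setoid (α ⊕ β) :=
  Setoid.ker (Sum.map (Quotient.mk s) (Quotient.mk t))

/-- The tensor product (horizontal concatenation) of two partitions. -/
def tensorPart {k l k' l' : ℕ} (p : PartitionKL k l) (q : PartitionKL k' l') :
    PartitionKL (k + k') (l + l') :=
  Setoid.comap
    (Sum.elim
      (fun a : Fin (k + k') =>
        (Sum.map (Sum.inl : Fin k → Fin k ⊕ Fin l) (Sum.inl : Fin k' → Fin k' ⊕ Fin l')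
          (finSumFinEquiv.symm a)))
      (fun b : Fin (l + l') =>
        (Sum.map (Sum.inr : Fin l → Fin k ⊕ Fin l) (Sum.inr : Fin l' → Fin k' ⊕ Fin l')
          (finSumFinEquiv.symm b))))
    (Partition.sumSetoid p q)

/-- The composition `qp ∈ P(k,m)` of `p ∈ P(k,l)` with `q ∈ P(l,m)`: the lower points
of `p` are identified with the upper points of `q`, blocks that become connected are
joined, and the middle points are deleted. -/
def compPart {k l m : ℕ} (q : PartitionKL l m) (p : PartitionKL k l) : PartitionKL k m :=
  Setoid.comap (Sum.map (id : Fin k → Fin k) (Sum.inr : Fin m → Fin l ⊕ Fin m))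
    ((Setoid.ker fun x : Fin k ⊕ (Fin l ⊕ Fin m) =>
        Sum.map (Quotient.mk p) (id : Fin m → Fin m)
          ((Equiv.sumAssoc (Fin k) (Fin l) (Fin m)).symm x))
      ⊔ Setoid.ker (Sum.map (id : Fin k → Fin k) (Quotient.mk q)))

/-- The vertical reflection of a partition: the left-to-right order of the upper points
and of the lower points is reversed. -/
def reflPart {k l : ℕ} (p : PartitionKL k l) : PartitionKL k l :=
  Setoid.comap (Sum.map (Fin.rev : Fin k → Fin k) (Fin.rev : Fin l → Fin l)) p

/-- The involution `p* ∈ P(l,k)` of `p ∈ P(k,l)`: upper and lower points are interchanged. -/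
def invPart {k l : ℕ} (p : PartitionKL k l) : PartitionKL l k :=
  Setoid.comap (Sum.swap : Fin l ⊕ Fin k → Fin k ⊕ Fin l) p

/-- The `r`-fold tensor power of the identity partition: the `i`-th upper point is
connected to the `i`-th lower point. In particular `idPow 1` is the identity partition. -/
def idPow (r : ℕ) : PartitionKL r r := Setoid.ker (Sum.elim (id : Fin r → Fin r) id)

/-- Transport a partition along equalities of the numbers of points. -/
def castPart {k l k' l' : ℕ} (hk : k = k') (hl : l = l') (p : PartitionKL k l) :
    PartitionKL k' l' :=
  Setoid.comap (Sum.map (Fin.cast hk.symm) (Fin.cast hl.symm)) p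

/-- The partition `b_m ∈ P(0,m)` whose single block consists of all `m` lower points. -/
def bm (m : ℕ) : PartitionKL 0 m := ⊤

end Partition

/-- Let `q ∈ P(s,s)` satisfy `q = q*` and `q = qq`. If the `i`-th upper point and the
`j`-th lower point of `q` lie in the same block `V`, then the `i`-th lower point and
the `j`-th upper point also lie in `V`. -/
theorem projective_partition_symm {s : ℕ} (q : PartitionKL s s)
    (hq_star : q = Partition.invPart q) (hq_idem : q = Partition.compPart q q)
    (i j : Fin s) (h : q.r (Sum.inl i) (Sum.inr j)) :
    q.r (Sum.inl i) (Sum.inr i) ∧ q.r (Sum.inl i) (Sum.inl j) := by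
  have hswap : ∀ a b : Fin s, q.r (Sum.inl a) (Sum.inr b) → q.r (Sum.inl b) (Sum.inr a) := by
    intro a b hab
    have h2 : (Partition.invPart q).r (Sum.inl b) (Sum.inr a) := q.symm hab
    rwa [← hq_star] at h2
  have key : ∀ a b : Fin s, q.r (Sum.inl a) (Sum.inr b) → q.r (Sum.inl a) (Sum.inr a) := by
    intro a b hab
    have hba := hswap a b hab
    rw [hq_idem]
    show (_ ⊔ _ : Setoid (Fin s ⊕ (Fin s ⊕ Fin s))).r (Sum.inl a) (Sum.inr (Sum.inr a))
    have s1 : (Setoid.ker fun x : Fin s ⊕ (Fin s ⊕ Fin s) =>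
        Sum.map (Quotient.mk q) (id : Fin s → Fin s)
          ((Equiv.sumAssoc (Fin s) (Fin s) (Fin s)).symm x)).r
        (Sum.inl a) (Sum.inr (Sum.inl b)) := by
      show Sum.inl (Quotient.mk q (Sum.inl a)) = Sum.inl (Quotient.mk q (Sum.inr b))
      exact congrArg Sum.inl (Quotient.sound hab)
    have s2 : (Setoid.ker (Sum.map (id : Fin s → Fin s) (Quotient.mk q))).r
        (Sum.inr (Sum.inl b)) (Sum.inr (Sum.inr a)) := by
      show Sum.inr (Quotient.mk q (Sum.inl b)) = Sum.inr (Quotient.mk q (Sum.inr a))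
      exact congrArg Sum.inr (Quotient.sound hba)
    exact Setoid.trans' _ (Setoid.le_def.mp le_sup_left s1) (Setoid.le_def.mp le_sup_right s2)
  refine ⟨key i j h, ?_⟩
  have hjj : q.r (Sum.inl j) (Sum.inr j) := key j i (hswap i j h)
  exact q.trans h (q.symm hjj)
end

section
/- Let m ≥ 2 and n ∈ ℕ. Let π_m ∈ P(m,m) be the partition whose single block contains all m upper and all m lower points, and let σ_m ∈ P(m,m) be the partition whose blocks are: the four-point block consisting of the first and last upper points together with the first and last lower points, and the pair blocks consisting of the i-th upper point and the i-th lower point for each 1 < i < m. Let A be a unital C*-algebra and let u_{ij} ∈ A (1 ≤ i,j ≤ n) be self-adjoint elements which fulfill the relations R(p₀) for some p₀ ∈ P(0,l) (l ≥ 1) and R(q₀) for some q₀ ∈ P(k,0) (k ≥ 1). If the u_{ij} fulfill R(π_m) or fulfill R(σ_m), then Σ_{a=1}^n u_{ia}u_{ja} = δ_{ij}·1 and Σ_{a=1}^n u_{ai}u_{aj} = δ_{ij}·1 for all 1 ≤ i,j ≤ n (i.e., the matrix u = (u_{ij}) is orthogonal: uuᵗ = uᵗu = 1 in M_n(A)).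 -/
open scoped BigOperators

/-- The partition `σ_m ∈ P(m,m)`: its blocks are the four-point block consisting of
the first and last upper points together with the first and last lower points, and the
pair blocks consisting of the `i`-th upper and the `i`-th lower point for `1 < i < m`.
(The partition `π_m ∈ P(m,m)`, whose single block contains all points, is `⊤`.) -/
def sigmaPart (m : ℕ) : PartitionKL m m :=
  Setoid.ker fun x : Fin m ⊕ Fin m =>
    (fun i : Fin m => if (i : ℕ) = m - 1 then (0 : ℕ) else (i : ℕ)) (Sum.elim id id x)

section Analytic
variable {A : Type*} [CStarAlgebra A]

lemma psq_descent (x y : A) (hx : star x = x) (N : ℕ) (hN : 1 ≤ N) (h : x ^ N * y = 0) :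
    x * y = 0 := by
  have key : ∀ r : ℕ, x ^ (2^r) * y = 0 → x * y = 0 := by
    intro r
    induction r with
    | zero => simpa using id
    | succ r ih =>
      intro h2
      apply ih
      have hstar : star (x ^ (2^r) * y) = star y * x ^ (2^r) := by
        rw [star_mul, star_pow, hx]
      have hz : star (x ^ (2^r) * y) * (x ^ (2^r) * y) = 0 := by
        rw [hstar, mul_assoc, ← mul_assoc (x ^ (2^r)), ← pow_add]
        have h22 : 2^r + 2^r = 2^(r+1) := by ring
        rw [h22, h2, mul_zero]
      exact (CStarRing.star_mul_self_eq_zero_iff _).mp hz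
  apply key N
  have h2N : N ≤ 2 ^ N := Nat.le_of_lt (Nat.lt_two_pow_self (n := N))
  calc x ^ (2^N) * y = x ^ (2^N - N) * (x ^ N * y) := by
        rw [← mul_assoc, ← pow_add]; congr 2; omega
    _ = 0 := by rw [h, mul_zero]

lemma psq_cube_of_pow (x : A) (hx : IsSelfAdjoint x) (l : ℕ) (hl : 1 ≤ l)
    (h : x ^ (l+1) = x) : x ^ 3 = x := by
  have hspec : ∀ t ∈ spectrum ℝ x, t ^ (l+1) = t := by
    have heq : cfc (fun t : ℝ => t ^ (l+1)) x = cfc (fun t : ℝ => t) x := by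
      rw [cfc_pow_id x (l+1), cfc_id' ℝ x, h]
    have h' := eqOn_of_cfc_eq_cfc (a := x) heq (by fun_prop) (by fun_prop) hx
    exact fun t ht => h' ht
  have h3 : ∀ t ∈ spectrum ℝ x, t ^ 3 = t := by
    intro t ht
    have hp := hspec t ht
    rcases eq_or_ne t 0 with rfl | htne
    · simp
    · have hpl : t ^ l = 1 := by
        have hmul : t * t ^ l = t * 1 := by rw [mul_one, ← pow_succ']; exact hp
        exact mul_left_cancel₀ htne hmul
      have ht2 : t ^ 2 = 1 := by
        have habs : |t| ^ l = 1 := by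
          rw [← abs_pow, hpl, abs_one]
        have habs1 : |t| = 1 := by
          rcases lt_trichotomy |t| 1 with hlt | heq | hgt
          · exfalso
            have hc := pow_lt_one₀ (abs_nonneg t) hlt (by omega : l ≠ 0)
            rw [habs] at hc; exact lt_irrefl 1 hc
          · exact heq
          · exfalso
            have hc := one_lt_pow₀ hgt (by omega : l ≠ 0)
            rw [habs] at hc; exact lt_irrefl 1 hc
        calc t ^ 2 = |t| ^ 2 := by rw [sq_abs]
        _ = 1 := by rw [habs1, one_pow]
      calc t ^ 3 = t * t ^ 2 := by ring
      _ = t := by rw [ht2, mul_one]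
  calc x ^ 3 = cfc (fun t : ℝ => t ^ 3) x := (cfc_pow_id x 3).symm
  _ = cfc (fun t : ℝ => t) x := cfc_congr (fun t ht => h3 t ht)
  _ = x := cfc_id' ℝ x

end Analytic

section Pipe
variable {A : Type*} [Ring A]

lemma psq_pow_step (x : A) (hx : x ^ 3 = x) (t : ℕ) : x ^ (t + 3) = x ^ (t + 1) := by
  calc x ^ (t+3) = x ^ t * x ^ 3 := by rw [← pow_add]
  _ = x ^ t * x := by rw [hx]
  _ = x ^ (t+1) := by rw [pow_succ]

lemma psq_pow_odd (x : A) (hx : x ^ 3 = x) : ∀ t, x ^ (2*t + 1) = x := by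
  intro t
  induction t with
  | zero => simp
  | succ t ih =>
    rw [show 2*(t+1)+1 = (2*t)+3 by ring, psq_pow_step x hx, ih]

lemma psq_pow_even (x : A) (hx : x ^ 3 = x) : ∀ t, 1 ≤ t → x ^ (2*t) = x ^ 2 := by
  intro t
  induction t with
  | zero => omega
  | succ t ih =>
    intro _
    rcases Nat.eq_zero_or_pos t with rfl | ht
    · norm_num
    · rw [show 2*(t+1) = (2*t - 1) + 3 by omega, psq_pow_step x hx,
        show (2*t - 1) + 1 = 2*t by omega, ih ht]

lemma psq_pow_cycle {n : ℕ} (x : Fin n → A) (l : ℕ) (hl : 1 ≤ l)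
    (heo : ∀ a b, a ≠ b → x a * x b = 0)
    (hunit : ∑ a, x a ^ l = 1) (b : Fin n) : x b ^ (l+1) = x b := by
  obtain ⟨l', rfl⟩ : ∃ l', l = l' + 1 := ⟨l - 1, by omega⟩
  have hmul : x b * (∑ a, x a ^ (l'+1)) = x b := by rw [hunit, mul_one]
  rw [Finset.mul_sum] at hmul
  calc x b ^ (l'+1+1) = ∑ a, x b * x a ^ (l'+1) := by
        rw [Finset.sum_eq_single b]
        · rw [← pow_succ']
        · intro a _ hab
          rw [pow_succ', ← mul_assoc, heo b a (Ne.symm hab), zero_mul]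
        · intro hb; exact absurd (Finset.mem_univ b) hb
  _ = x b := hmul

lemma psq_sum_sq_one {n : ℕ} (x : Fin n → A) (l : ℕ) (hl : 1 ≤ l)
    (hcube : ∀ a, x a ^ 3 = x a)
    (heo : ∀ a b, a ≠ b → x a * x b = 0)
    (hunit : ∑ a, x a ^ l = 1) : ∑ a, x a * x a = 1 := by
  rcases Nat.even_or_odd l with ⟨t, ht⟩ | ⟨t, ht⟩
  · have ht1 : 1 ≤ t := by omega
    have hc : ∑ a, x a * x a = ∑ a, x a ^ l := by
      apply Finset.sum_congr rfl
      intro a _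
      rw [show l = 2*t by omega, psq_pow_even (x a) (hcube a) t ht1, sq]
    rw [hc, hunit]
  · have hx1 : ∑ a, x a = 1 := by
      rw [← hunit]
      apply Finset.sum_congr rfl
      intro a _
      rw [show l = 2*t+1 by omega, psq_pow_odd (x a) (hcube a) t]
    have hsq : ∀ b, x b * x b = x b := by
      intro b
      have hmul : x b * (∑ a, x a) = x b := by rw [hx1, mul_one]
      rw [Finset.mul_sum, Finset.sum_eq_single b] at hmul
      · exact hmul
      · intro a _ hab; exact heo b a (Ne.symm hab)
      · intro hb; exact absurd (Finset.mem_univ b) hb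
    calc ∑ a, x a * x a = ∑ a, x a := Finset.sum_congr rfl (fun a _ => hsq a)
    _ = 1 := hx1

end Pipe


section Collapse
open PartitionKL

open PartitionKL

variable {m' n : ℕ} {A : Type*} [Ring A] (u : Fin n → Fin n → A)

lemma ofFn_prod_ite' : ∀ (r : ℕ) (v w : A),
    (List.ofFn (fun t : Fin (r+1) => if (t:ℕ) < r then v else w)).prod = v ^ r * w := by
  intro r
  induction r with
  | zero =>
    intro v w
    simp only [Nat.lt_irrefl, if_false, pow_zero, one_mul]
    simp
  | succ m ih =>
    intro v w
    rw [List.ofFn_succ, List.prod_cons]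
    have h0 : ((0 : Fin (m+2)) : ℕ) < m + 1 := by simp
    rw [if_pos h0]
    have : (fun i : Fin (m+1) => if ((i.succ : Fin (m+2)) : ℕ) < m + 1 then v else w)
        = fun t : Fin (m+1) => if (t:ℕ) < m then v else w := by
      funext t; simp [Fin.val_succ, Nat.succ_lt_succ_iff]
    rw [this, ih, ← mul_assoc, ← pow_succ']

-- the two words
lemma wordA (i j a : Fin n) :
    uProd u (fun t : Fin (m'+1) => if (t:ℕ) < m' then i else j) (fun _ => a)
      = u i a ^ m' * u j a := by
  unfold uProd
  have : (fun t : Fin (m'+1) => u (if (t:ℕ) < m' then i else j) a)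
      = fun t : Fin (m'+1) => if (t:ℕ) < m' then u i a else u j a := by
    funext t; exact apply_ite (fun r => u r a) _ _ _
  rw [this, ofFn_prod_ite']

lemma wordB (i a b : Fin n) :
    uProd u (fun _ => i) (fun t : Fin (m'+1) => if (t:ℕ) < m' then a else b)
      = u i a ^ m' * u i b := by
  unfold uProd
  have : (fun t : Fin (m'+1) => u i (if (t:ℕ) < m' then a else b))
      = fun t : Fin (m'+1) => if (t:ℕ) < m' then u i a else u i b := by
    funext t; exact apply_ite (fun c => u i c) _ _ _
  rw [this, ofFn_prod_ite']

lemma deltaCond_const {k l : ℕ} (p : PartitionKL k l) (a : Fin n) :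
    DeltaCond p (fun _ : Fin k => a) (fun _ : Fin l => a) := by
  intro x y _
  rcases x with x | x <;> rcases y with y | y <;> rfl

-- π case, K1 :  0 = u i a ^ m' * u j a  for i ≠ j
lemma K1_pi (hm' : 1 ≤ m') (hπ : FulfillsR (⊤ : PartitionKL (m'+1) (m'+1)) u)
    (i j a : Fin n) (hij : i ≠ j) : u i a ^ m' * u j a = 0 := by
  classical
  have H := hπ (fun _ => a) (fun t : Fin (m'+1) => if (t:ℕ) < m' then i else j)
  rw [Finset.sum_eq_zero, Finset.sum_eq_single (fun _ : Fin (m'+1) => a)] at H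
  · rw [if_pos (deltaCond_const (⊤ : PartitionKL (m'+1) (m'+1)) a), wordA] at H
    exact H.symm
  · intro γ' _ hne
    rw [if_neg]
    intro hcond
    apply hne
    funext t
    have := hcond (Sum.inr t) (Sum.inl ⟨0, by omega⟩) trivial
    simpa using this
  · intro h; exact absurd (Finset.mem_univ _) h
  · intro γ _
    rw [if_neg]
    intro hcond
    have := hcond (Sum.inr ⟨0, by omega⟩) (Sum.inr ⟨m', by omega⟩) trivial
    simp only [Sum.elim_inr] at this
    rw [if_pos (by exact hm'), if_neg (by simp)] at this
    exact hij this

-- π case, K2 : u i a ^ m' * u i b = 0 for a ≠ b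
lemma K2_pi (hm' : 1 ≤ m') (hπ : FulfillsR (⊤ : PartitionKL (m'+1) (m'+1)) u)
    (i a b : Fin n) (hab : a ≠ b) : u i a ^ m' * u i b = 0 := by
  classical
  have H := hπ (fun t : Fin (m'+1) => if (t:ℕ) < m' then a else b) (fun _ => i)
  rw [Finset.sum_eq_single (fun _ : Fin (m'+1) => i)] at H
  rw [Finset.sum_eq_zero] at H
  · rw [if_pos] at H
    · rw [wordB] at H; exact H
    · -- DeltaCond ⊤ (const i) (const i)? no: first arg γ = const i, β = const i
      exact deltaCond_const _ i
  · intro γ' _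
    rw [if_neg]
    intro hcond
    have := hcond (Sum.inl ⟨0, by omega⟩) (Sum.inl ⟨m', by omega⟩) trivial
    simp only [Sum.elim_inl] at this
    rw [if_pos (by exact hm'), if_neg (by simp)] at this
    exact hab this
  · intro γ _ hne
    rw [if_neg]
    intro hcond
    apply hne
    funext t
    have := hcond (Sum.inl t) (Sum.inr ⟨0, by omega⟩) trivial
    simpa using this
  · intro h; exact absurd (Finset.mem_univ _) h

end Collapse

section Sigma
open PartitionKL
variable {m' n : ℕ} {A : Type*} [Ring A] (u : Fin n → Fin n → A)

lemma sigma_rel {m : ℕ} (x y : Fin m ⊕ Fin m)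
    (h : (if ((Sum.elim id id x : Fin m) : ℕ) = m - 1 then (0:ℕ) else ((Sum.elim id id x : Fin m) : ℕ))
       = (if ((Sum.elim id id y : Fin m) : ℕ) = m - 1 then (0:ℕ) else ((Sum.elim id id y : Fin m) : ℕ))) :
    (sigmaPart m).r x y := h

lemma K1_sigma (hm' : 1 ≤ m') (hσ : FulfillsR (sigmaPart (m'+1)) u)
    (i j a : Fin n) (hij : i ≠ j) : u i a ^ m' * u j a = 0 := by
  classical
  have H := hσ (fun _ => a) (fun t : Fin (m'+1) => if (t:ℕ) < m' then i else j)
  rw [Finset.sum_eq_zero, Finset.sum_eq_single (fun _ : Fin (m'+1) => a)] at H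
  · rw [if_pos (deltaCond_const (sigmaPart (m'+1)) a), wordA] at H
    exact H.symm
  · intro γ' _ hne
    rw [if_neg]
    intro hcond
    apply hne
    funext t
    by_cases ht : (t : ℕ) = m'
    · have := hcond (Sum.inl ⟨0, by omega⟩) (Sum.inr t)
        (sigma_rel _ _ (by simp [ht, hm'] <;> omega))
      simpa using this.symm
    · have := hcond (Sum.inl t) (Sum.inr t) (sigma_rel _ _ (by simp))
      simpa using this.symm
  · intro h; exact absurd (Finset.mem_univ _) h
  · intro γ _
    rw [if_neg]
    intro hcond
    have := hcond (Sum.inr ⟨0, by omega⟩) (Sum.inr ⟨m', by omega⟩)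
      (sigma_rel _ _ (by simp <;> omega))
    simp only [Sum.elim_inr] at this
    rw [if_pos (by exact hm'), if_neg (by simp)] at this
    exact hij this

lemma K2_sigma (hm' : 1 ≤ m') (hσ : FulfillsR (sigmaPart (m'+1)) u)
    (i a b : Fin n) (hab : a ≠ b) : u i a ^ m' * u i b = 0 := by
  classical
  have H := hσ (fun t : Fin (m'+1) => if (t:ℕ) < m' then a else b) (fun _ => i)
  rw [Finset.sum_eq_single (fun _ : Fin (m'+1) => i)] at H
  rw [Finset.sum_eq_zero] at H
  · rw [if_pos (deltaCond_const (sigmaPart (m'+1)) i), wordB] at H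
    exact H
  · intro γ' _
    rw [if_neg]
    intro hcond
    have := hcond (Sum.inl ⟨0, by omega⟩) (Sum.inl ⟨m', by omega⟩)
      (sigma_rel _ _ (by simp <;> omega))
    simp only [Sum.elim_inl] at this
    rw [if_pos (by exact hm'), if_neg (by simp)] at this
    exact hab this
  · intro γ _ hne
    rw [if_neg]
    intro hcond
    apply hne
    funext t
    by_cases ht : (t : ℕ) = m'
    · have := hcond (Sum.inl t) (Sum.inr ⟨0, by omega⟩)
        (sigma_rel _ _ (by simp [ht, hm'] <;> omega))
      simpa using this
    · have := hcond (Sum.inl t) (Sum.inr t) (sigma_rel _ _ (by simp))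
      simpa using this
  · intro h; exact absurd (Finset.mem_univ _) h

end Sigma

section Units
open PartitionKL
variable {n : ℕ} {A : Type*} [Ring A] (u : Fin n → Fin n → A)

lemma ofFn_prod_zero' : ∀ {r : ℕ} (g : Fin r → A) (t : ℕ) (h : t + 1 < r),
    g ⟨t, Nat.lt_of_succ_lt h⟩ * g ⟨t+1, h⟩ = 0 → (List.ofFn g).prod = 0 := by
  intro r
  induction r with
  | zero => intro g t h; omega
  | succ r ih =>
    intro g t h hz
    rw [List.ofFn_succ, List.prod_cons]
    rcases Nat.eq_zero_or_pos t with rfl | ht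
    · have hr : 1 ≤ r := by omega
      obtain ⟨r', rfl⟩ : ∃ r', r = r' + 1 := ⟨r - 1, by omega⟩
      rw [List.ofFn_succ, List.prod_cons, ← mul_assoc]
      have hz' : g 0 * (fun i : Fin (r'+1) => g i.succ) 0 = 0 := by
        convert hz using 3 <;> rfl
      rw [show g 0 * (g (0 : Fin (r'+1)).succ) = 0 from hz', zero_mul]
    · obtain ⟨t', rfl⟩ : ∃ t', t = t' + 1 := ⟨t - 1, by omega⟩
      have h' : t' + 1 < r := by omega
      have := ih (fun i => g i.succ) t' h' (by convert hz using 3 <;> rfl)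
      rw [this, mul_zero]

lemma const_or_adj {r n' : ℕ} (hr : 0 < r) (f : Fin r → Fin n') :
    (∃ a, f = fun _ => a) ∨ ∃ t, ∃ (h : t+1 < r),
      f ⟨t, Nat.lt_of_succ_lt h⟩ ≠ f ⟨t+1, h⟩ := by
  classical
  by_cases hadj : ∃ t, ∃ (h : t+1 < r), f ⟨t, Nat.lt_of_succ_lt h⟩ ≠ f ⟨t+1, h⟩
  · right; exact hadj
  · left
    push_neg at hadj
    refine ⟨f ⟨0, hr⟩, ?_⟩
    have key : ∀ v (hv : v < r), f ⟨v, hv⟩ = f ⟨0, hr⟩ := by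
      intro v
      induction v with
      | zero => intro hv; rfl
      | succ v ihv =>
        intro hv
        rw [← hadj v hv]
        exact ihv (Nat.lt_of_succ_lt hv)
    funext s
    exact key s.1 s.2

lemma unit_row {l : ℕ} (hl : 1 ≤ l) (p₀ : PartitionKL 0 l) (hp₀ : FulfillsR p₀ u)
    (heo2 : ∀ (i a b : Fin n), a ≠ b → u i a * u i b = 0) (i : Fin n) :
    ∑ a, u i a ^ l = 1 := by
  classical
  have H := hp₀ default (fun _ => i)
  have hl1 : (∑ γ : Fin 0 → Fin n,
      if DeltaCond p₀ γ (fun _ => i) then uProd u γ default else 0) = 1 := by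
    rw [Fintype.sum_unique]
    rw [if_pos]
    · unfold uProd; simp
    · intro x y _
      rcases x with x | x
      · exact x.elim0
      · rcases y with y | y
        · exact y.elim0
        · rfl
  rw [hl1] at H
  -- H : 1 = ∑ γ' ...
  have hsub : (Finset.univ.image (fun a : Fin n => (fun _ : Fin l => a))) ⊆
      (Finset.univ : Finset (Fin l → Fin n)) := Finset.subset_univ _
  have hz : ∀ γ' ∈ (Finset.univ : Finset (Fin l → Fin n)),
      γ' ∉ Finset.univ.image (fun a : Fin n => (fun _ : Fin l => a)) →
      (if DeltaCond p₀ default γ' then uProd u (fun _ => i) γ' else 0) = 0 := by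
    intro γ' _ hnot
    have hnc : ¬ ∃ a, γ' = fun _ : Fin l => a := by
      intro ⟨a, ha⟩
      exact hnot (Finset.mem_image.mpr ⟨a, Finset.mem_univ a, ha.symm⟩)
    rcases const_or_adj (by omega : 0 < l) γ' with ⟨a, ha⟩ | ⟨t, h, hne⟩
    · exact absurd ⟨a, ha⟩ hnc
    · have hzero : uProd u (fun _ : Fin l => i) γ' = 0 := by
        unfold uProd
        apply ofFn_prod_zero' _ t h
        exact heo2 i _ _ hne
      rw [hzero]
      simp
  have hinj : ∀ a ∈ (Finset.univ : Finset (Fin n)), ∀ b ∈ Finset.univ,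
      (fun _ : Fin l => a) = (fun _ : Fin l => b) → a = b := by
    intro a _ b _ hab
    exact congrFun hab ⟨0, hl⟩
  calc ∑ a, u i a ^ l
      = ∑ a, (if DeltaCond p₀ default (fun _ : Fin l => a)
          then uProd u (fun _ => i) (fun _ : Fin l => a) else 0) := by
        apply Finset.sum_congr rfl
        intro a _
        rw [if_pos]
        · unfold uProd
          rw [show (fun t : Fin l => u ((fun _ : Fin l => i) t) ((fun _ : Fin l => a) t))
              = fun _ : Fin l => u i a from rfl]
          rw [List.ofFn_const, List.prod_replicate]
        · intro x y _
          rcases x with x | x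
          · exact x.elim0
          · rcases y with y | y
            · exact y.elim0
            · rfl
    _ = ∑ γ' ∈ Finset.univ.image (fun a : Fin n => (fun _ : Fin l => a)),
          (if DeltaCond p₀ default γ' then uProd u (fun _ => i) γ' else 0) :=
        by rw [Finset.sum_image hinj]
    _ = ∑ γ' : Fin l → Fin n,
          (if DeltaCond p₀ default γ' then uProd u (fun _ => i) γ' else 0) :=
        Finset.sum_subset hsub hz
    _ = 1 := H.symm

lemma unit_col {k : ℕ} (hk : 1 ≤ k) (q₀ : PartitionKL k 0) (hq₀ : FulfillsR q₀ u)
    (heo1 : ∀ (r r' c : Fin n), r ≠ r' → u r c * u r' c = 0) (c : Fin n) :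
    ∑ r, u r c ^ k = 1 := by
  classical
  have H := hq₀ (fun _ => c) default
  have hr1 : (∑ γ' : Fin 0 → Fin n,
      if DeltaCond q₀ (fun _ => c) γ' then uProd u default γ' else 0) = 1 := by
    rw [Fintype.sum_unique]
    rw [if_pos]
    · unfold uProd; simp
    · intro x y _
      rcases x with x | x
      · rcases y with y | y
        · rfl
        · exact y.elim0
      · exact x.elim0
  rw [hr1] at H
  -- H : ∑ γ ... = 1
  have hsub : (Finset.univ.image (fun a : Fin n => (fun _ : Fin k => a))) ⊆
      (Finset.univ : Finset (Fin k → Fin n)) := Finset.subset_univ _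
  have hz : ∀ γ ∈ (Finset.univ : Finset (Fin k → Fin n)),
      γ ∉ Finset.univ.image (fun a : Fin n => (fun _ : Fin k => a)) →
      (if DeltaCond q₀ γ default then uProd u γ (fun _ => c) else 0) = 0 := by
    intro γ _ hnot
    have hnc : ¬ ∃ a, γ = fun _ : Fin k => a := by
      intro ⟨a, ha⟩
      exact hnot (Finset.mem_image.mpr ⟨a, Finset.mem_univ a, ha.symm⟩)
    rcases const_or_adj (by omega : 0 < k) γ with ⟨a, ha⟩ | ⟨t, h, hne⟩
    · exact absurd ⟨a, ha⟩ hnc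
    · have hzero : uProd u γ (fun _ : Fin k => c) = 0 := by
        unfold uProd
        apply ofFn_prod_zero' _ t h
        exact heo1 _ _ c hne
      rw [hzero]
      simp
  have hinj : ∀ a ∈ (Finset.univ : Finset (Fin n)), ∀ b ∈ Finset.univ,
      (fun _ : Fin k => a) = (fun _ : Fin k => b) → a = b := by
    intro a _ b _ hab
    exact congrFun hab ⟨0, hk⟩
  calc ∑ r, u r c ^ k
      = ∑ r, (if DeltaCond q₀ (fun _ : Fin k => r) default
          then uProd u (fun _ : Fin k => r) (fun _ => c) else 0) := by
        apply Finset.sum_congr rfl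
        intro r _
        rw [if_pos]
        · unfold uProd
          rw [show (fun t : Fin k => u ((fun _ : Fin k => r) t) ((fun _ : Fin k => c) t))
              = fun _ : Fin k => u r c from rfl]
          rw [List.ofFn_const, List.prod_replicate]
        · intro x y _
          rcases x with x | x
          · rcases y with y | y
            · rfl
            · exact y.elim0
          · exact x.elim0
    _ = ∑ γ ∈ Finset.univ.image (fun a : Fin n => (fun _ : Fin k => a)),
          (if DeltaCond q₀ γ default then uProd u γ (fun _ => c) else 0) :=
        by rw [Finset.sum_image hinj]
    _ = ∑ γ : Fin k → Fin n,
          (if DeltaCond q₀ γ default then uProd u γ (fun _ => c) else 0) :=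
        Finset.sum_subset hsub hz
    _ = 1 := H

end Units



/-- **Enforced orthogonality via `π_m` or `σ_m`.** Let `m ≥ 2` and let the self-adjoint
elements `u i j` of a unital C*-algebra fulfill `R(p₀)` for some `p₀ ∈ P(0,l)` (`l ≥ 1`)
and `R(q₀)` for some `q₀ ∈ P(k,0)` (`k ≥ 1`). If they fulfill `R(π_m)` or `R(σ_m)`,
then the matrix `u` is orthogonal: `u uᵗ = uᵗ u = 1`. -/
theorem piSigma_enforce_orthogonality {m n k l : ℕ} (hm : 2 ≤ m) (hl : 1 ≤ l) (hk : 1 ≤ k)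
    {A : Type*} [CStarAlgebra A] (u : Fin n → Fin n → A)
    (hsa : ∀ i j, star (u i j) = u i j)
    (p₀ : PartitionKL 0 l) (hp₀ : PartitionKL.FulfillsR p₀ u)
    (q₀ : PartitionKL k 0) (hq₀ : PartitionKL.FulfillsR q₀ u)
    (hπσ : PartitionKL.FulfillsR (⊤ : PartitionKL m m) u ∨ PartitionKL.FulfillsR (sigmaPart m) u) :
    ∀ i j : Fin n,
      (∑ a : Fin n, u i a * u j a) = (if i = j then 1 else 0)
      ∧ (∑ a : Fin n, u a i * u a j) = (if i = j then 1 else 0) := by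
  classical
  obtain ⟨m', rfl⟩ : ∃ m', m = m' + 1 := ⟨m - 1, by omega⟩
  have hm' : 1 ≤ m' := by omega
  have K1 : ∀ (r r' c : Fin n), r ≠ r' → u r c ^ m' * u r' c = 0 := by
    rcases hπσ with hπ | hσ
    · exact fun r r' c h => K1_pi u hm' hπ r r' c h
    · exact fun r r' c h => K1_sigma u hm' hσ r r' c h
  have K2 : ∀ (i a b : Fin n), a ≠ b → u i a ^ m' * u i b = 0 := by
    rcases hπσ with hπ | hσ
    · exact fun i a b h => K2_pi u hm' hπ i a b h
    · exact fun i a b h => K2_sigma u hm' hσ i a b h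
  have EO1 : ∀ (r r' c : Fin n), r ≠ r' → u r c * u r' c = 0 := fun r r' c h =>
    psq_descent (u r c) (u r' c) (hsa r c) m' hm' (K1 r r' c h)
  have EO2 : ∀ (i a b : Fin n), a ≠ b → u i a * u i b = 0 := fun i a b h =>
    psq_descent (u i a) (u i b) (hsa i a) m' hm' (K2 i a b h)
  have UR : ∀ i, ∑ a, u i a ^ l = 1 := unit_row u hl p₀ hp₀ EO2
  have UC : ∀ c, ∑ r, u r c ^ k = 1 := unit_col u hk q₀ hq₀ EO1
  have CUBE : ∀ i a, u i a ^ 3 = u i a := by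
    intro i a
    have hcyc := psq_pow_cycle (fun b => u i b) l hl (fun a b h => EO2 i a b h) (UR i) a
    exact psq_cube_of_pow (u i a) (hsa i a) l hl hcyc
  intro i j
  constructor
  · rcases eq_or_ne i j with rfl | hij
    · rw [if_pos rfl]
      exact psq_sum_sq_one (fun a => u i a) l hl (fun a => CUBE i a)
        (fun a b h => EO2 i a b h) (UR i)
    · rw [if_neg hij]
      exact Finset.sum_eq_zero (fun a _ => EO1 i j a hij)
  · rcases eq_or_ne i j with rfl | hij
    · rw [if_pos rfl]
      exact psq_sum_sq_one (fun r => u r i) k hk (fun r => CUBE r i)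
        (fun a b h => EO1 a b i h) (UC i)
    · rw [if_neg hij]
      exact Finset.sum_eq_zero (fun a _ => EO2 a i j hij)
end
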